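/- arXiv:math/0610800 — 4 statements merged into one kernel-verified Lean document; each statement's English description precedes it below -/
import Mathlib

section
/- If the higher-dimensional splitting necklace theorem holds for the numbers of thieves k₁ ≥ 2 and k₂ ≥ 2 (for all n, d, and all admissible choices of m₁,…,m_d), then it also holds for k = k₁k₂. -/
open MeasureTheory
open scoped ENNReal

section helpers
open MeasureTheory

/-- Split a target sum below the total. -/
lemma nk_exists_le_sum {d : ℕ} (m : Fin d → ℕ) (s : ℕ) (h : s ≤ ∑ i, m i) :
    ∃ a : Fin d → ℕ, (∀ i, a i ≤ m i) ∧ ∑ i, a i = s := by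
  induction s with
  | zero => exact ⟨0, fun i => Nat.zero_le _, by simp⟩
  | succ s ih =>
    obtain ⟨a, hle, hsum⟩ := ih (Nat.le_of_succ_le h)
    have : ∃ i, a i < m i := by
      by_contra hc
      push_neg at hc
      have : ∑ i, m i ≤ ∑ i, a i := Finset.sum_le_sum fun i _ => hc i
      omega
    obtain ⟨i₀, hi₀⟩ := this
    refine ⟨Function.update a i₀ (a i₀ + 1), fun i => ?_, ?_⟩
    · rcases eq_or_ne i i₀ with rfl | hne
      · simpa using hi₀
      · simp [Function.update_of_ne hne, hle i]
    · rw [Finset.sum_update_of_mem (Finset.mem_univ _)]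
      have h2 : ∑ i, a i = a i₀ + ∑ x ∈ Finset.univ \ {i₀}, a x :=
        Finset.sum_eq_add_sum_sdiff_singleton_of_mem (Finset.mem_univ i₀) a
      omega

/-- Uniqueness of cell containing a strictly interior point. -/
lemma nk_cell_unique {a : ℕ} {u : Fin (a+2) → ℝ} (hu : Monotone u) {x : ℝ}
    {q q' : Fin (a+1)} (h1 : u q.castSucc < x) (h2 : x < u q.succ)
    (h1' : u q'.castSucc < x) (h2' : x < u q'.succ) : q = q' := by
  by_contra hne
  rcases lt_or_gt_of_ne hne with h | h
  · have : u q.succ ≤ u q'.castSucc := hu (by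
      simp only [Fin.le_def, Fin.coe_castSucc, Fin.val_succ]; exact h)
    linarith
  · have : u q'.succ ≤ u q.castSucc := hu (by
      simp only [Fin.le_def, Fin.coe_castSucc, Fin.val_succ]; exact h)
    linarith

/-- Find the cell strictly containing a point avoiding the cut values. -/
lemma nk_find_cell {m : ℕ} {w : Fin (m+2) → ℝ} (hw : Monotone w)
    (hw0 : w 0 = 0) (hwl : w (Fin.last (m+1)) = 1) {x : ℝ}
    (hx0 : 0 ≤ x) (hx1 : x ≤ 1) (hne : ∀ t, w t ≠ x) :
    ∃ j : Fin (m+1), w j.castSucc < x ∧ x < w j.succ := by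
  classical
  set T := Finset.univ.filter (fun t : Fin (m+2) => w t ≤ x) with hT
  have h0 : (0 : Fin (m+2)) ∈ T := by simp [hT, hw0, hx0]
  have hTne : T.Nonempty := ⟨0, h0⟩
  set t := T.max' hTne with ht
  have htmem : t ∈ T := T.max'_mem hTne
  have htle : w t ≤ x := by simpa [hT] using htmem
  have htlt : w t < x := lt_of_le_of_ne htle (hne t)
  have hxlt1 : x < 1 := lt_of_le_of_ne hx1 (fun h => hne (Fin.last _) (by rw [hwl, h]))
  have htne : t ≠ Fin.last (m+1) := by
    intro h; rw [h, hwl] at htlt; linarith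
  have htval : (t : ℕ) < m + 1 := by
    have := t.isLt; rcases Nat.lt_or_ge (t : ℕ) (m+1) with h | h
    · exact h
    · exact absurd (Fin.ext (by omega : (t : ℕ) = m + 1)) htne
  refine ⟨⟨t, htval⟩, by simpa [Fin.castSucc] using htlt, ?_⟩
  by_contra hc
  push_neg at hc
  have hmem2 : (⟨(t : ℕ) + 1, by omega⟩ : Fin (m+2)) ∈ T := by
    simpa [hT] using hc
  have h2 : (⟨(t : ℕ) + 1, by omega⟩ : Fin (m+2)) ≤ t := by
    exact T.le_max' _ hmem2
  simp [Fin.le_def] at h2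

/-- Refinement decomposition: every cell of the fine cut structure `w`
lies inside some cell of the coarse structure `u`, provided all values of `u`
occur among the values of `w`. -/
lemma nk_decomp {a m : ℕ} {u : Fin (a+2) → ℝ} {w : Fin (m+2) → ℝ}
    (hu : Monotone u) (hw : Monotone w)
    (hu0 : u 0 = 0) (hul : u (Fin.last (a+1)) = 1)
    (hw0 : w 0 = 0) (hwl : w (Fin.last (m+1)) = 1)
    (hmem : ∀ q, ∃ t, w t = u q) (j : Fin (m+1)) :
    ∃ q : Fin (a+1), u q.castSucc ≤ w j.castSucc ∧ w j.succ ≤ u q.succ := by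
  classical
  set Q := Finset.univ.filter
    (fun q : Fin (a+1) => u q.castSucc ≤ w j.castSucc) with hQ
  have h0 : (0 : Fin (a+1)) ∈ Q := by
    have : u (0 : Fin (a+1)).castSucc = 0 := by
      simpa using hu0
    simp only [hQ, Finset.mem_filter, Finset.mem_univ, true_and, this]
    rw [← hw0]; exact hw (Fin.zero_le _)
  have hQne : Q.Nonempty := ⟨0, h0⟩
  set q := Q.max' hQne with hq
  have hqmem : q ∈ Q := Q.max'_mem hQne
  have hqle : u q.castSucc ≤ w j.castSucc := by simpa [hQ] using hqmem
  refine ⟨q, hqle, ?_⟩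
  by_contra hc
  push_neg at hc
  -- u q.succ < w j.succ; since u q.succ occurs in w, it occurs at index ≤ j
  obtain ⟨t, htv⟩ := hmem q.succ
  have ht : t ≤ j.castSucc := by
    by_contra hts
    push_neg at hts
    have : w j.succ ≤ w t := hw (by
      simp only [Fin.le_def, Fin.val_succ]
      have := hts; simp only [Fin.lt_def, Fin.coe_castSucc] at this
      omega)
    rw [htv] at this
    exact absurd this (not_le.mpr hc)
  have hle2 : u q.succ ≤ w j.castSucc := htv ▸ hw ht
  -- if q is not the last, q+1 would also be in Q, contradicting maximality
  rcases Nat.lt_or_ge ((q : ℕ) + 1) (a + 1) with hql | hql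
  · have hmem2 : (⟨(q : ℕ) + 1, hql⟩ : Fin (a+1)) ∈ Q := by
      simp only [hQ, Finset.mem_filter, Finset.mem_univ, true_and]
      have : (⟨(q : ℕ) + 1, hql⟩ : Fin (a+1)).castSucc = q.succ := by
        simp [Fin.ext_iff]
      rw [this]; exact hle2
    have h2 : (⟨(q : ℕ) + 1, hql⟩ : Fin (a+1)) ≤ q := Q.le_max' _ hmem2
    simp [Fin.le_def] at h2
  · -- q is last: u q.succ = 1, but w j.succ ≤ 1 always? we have 1 < w j.succ
    have hqlast : q.succ = Fin.last (a+1) := by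
      have := q.isLt; simp [Fin.ext_iff]; omega
    rw [hqlast, hul] at hc
    have : w j.succ ≤ 1 := hwl ▸ hw (Fin.le_last _)
    linarith

/-- Merge two cut structures into a single monotone one containing all values. -/
lemma nk_merge {a b : ℕ} (u : Fin (a+2) → ℝ) (v : Fin (b+2) → ℝ)
    (hu : Monotone u) (hv : Monotone v) (hu0 : u 0 = 0)
    (hul : u (Fin.last (a+1)) = 1)
    (hv0 : v 0 = 0) (hvl : v (Fin.last (b+1)) = 1) :
    ∃ w : Fin (a + b + 2) → ℝ, Monotone w ∧ w 0 = 0 ∧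
      w (Fin.last (a + b + 1)) = 1 ∧
      (∀ q, ∃ t, w t = u q) ∧ (∀ q, ∃ t, w t = v q) := by
  classical
  set L : List ℝ := List.ofFn u ++ List.ofFn (fun q : Fin b => v q.succ.castSucc)
    with hL
  set W : List ℝ := L.mergeSort (· ≤ ·) with hW
  have hlen : W.length = a + b + 2 := by
    simp only [hW, List.length_mergeSort, hL, List.length_append, List.length_ofFn]
    omega
  have hperm : W.Perm L := List.mergeSort_perm L _
  have hsorted : List.Pairwise (· ≤ ·) W := by
    have := List.pairwise_mergeSort (le := fun a b : ℝ => decide (a ≤ b))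
      (fun a b c => by simpa using le_trans) (fun a b => by simpa using le_total a b) L
    refine this.imp ?_
    simp
  set w : Fin (a + b + 2) → ℝ := fun t => W.get (Fin.cast hlen.symm t) with hw
  have hmono : Monotone w := by
    intro s t hst
    exact hsorted.sortedLE.monotone_get hst
  -- every element of L is in [0,1]
  have hbound : ∀ x ∈ L, 0 ≤ x ∧ x ≤ 1 := by
    intro x hx
    rw [hL, List.mem_append] at hx
    rcases hx with hx | hx
    · rw [List.mem_ofFn] at hx
      obtain ⟨q, rfl⟩ := hx
      exact ⟨hu0 ▸ hu (Fin.zero_le _), hul ▸ hu (Fin.le_last _)⟩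
    · rw [List.mem_ofFn] at hx
      obtain ⟨q, rfl⟩ := hx
      exact ⟨hv0 ▸ hv (Fin.zero_le _), hvl ▸ hv (Fin.le_last _)⟩
  have hWbound : ∀ x ∈ W, 0 ≤ x ∧ x ≤ 1 := fun x hx => hbound x (hperm.mem_iff.mp hx)
  have hmemW : ∀ t : Fin (a+b+2), w t ∈ W :=
    fun t => List.get_mem W ⟨t.val, by rw [hlen]; exact t.isLt⟩
  -- value membership: u values
  have hmu : ∀ q, ∃ t, w t = u q := by
    intro q
    have : u q ∈ W := hperm.mem_iff.mpr (by
      rw [hL, List.mem_append, List.mem_ofFn]; exact Or.inl ⟨q, rfl⟩)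
    obtain ⟨t, htv⟩ := List.get_of_mem this
    exact ⟨Fin.cast hlen t, by simpa [hw] using htv⟩
  have hmv : ∀ q, ∃ t, w t = v q := by
    intro q
    rcases Nat.eq_zero_or_pos (q : ℕ) with h0 | hpos
    · obtain ⟨t, htv⟩ := hmu 0
      refine ⟨t, ?_⟩
      have : q = 0 := Fin.ext h0
      rw [this, hv0, htv, hu0]
    rcases Nat.lt_or_ge (q : ℕ) (b + 1) with hlt | hge
    · -- q = q'.succ.castSucc for q' = ⟨q - 1, _⟩ : Fin b
      have hq' : (q : ℕ) - 1 < b := by omega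
      have : v q ∈ W := hperm.mem_iff.mpr (by
        rw [hL, List.mem_append]
        right
        rw [List.mem_ofFn]
        refine ⟨⟨(q : ℕ) - 1, hq'⟩, ?_⟩
        have heq : (⟨(q : ℕ) - 1, hq'⟩ : Fin b).succ.castSucc = q := by
          apply Fin.ext
          simp only [Fin.coe_castSucc, Fin.val_succ]
          omega
        show v (⟨(q : ℕ) - 1, hq'⟩ : Fin b).succ.castSucc = v q
        rw [heq])
      obtain ⟨t, htv⟩ := List.get_of_mem this
      exact ⟨Fin.cast hlen t, by simpa [hw] using htv⟩
    · obtain ⟨t, htv⟩ := hmu (Fin.last (a+1))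
      refine ⟨t, ?_⟩
      have : q = Fin.last (b+1) := Fin.ext (by have := q.isLt; simp; omega)
      rw [this, hvl, htv, hul]
  -- endpoints
  have h0mem : ∃ t, w t = 0 := by obtain ⟨t, ht⟩ := hmu 0; exact ⟨t, by rw [ht, hu0]⟩
  have h1mem : ∃ t, w t = 1 := by
    obtain ⟨t, ht⟩ := hmu (Fin.last (a+1)); exact ⟨t, by rw [ht, hul]⟩
  have hw0 : w 0 = 0 := by
    obtain ⟨t, ht⟩ := h0mem
    have h1 : w 0 ≤ w t := hmono (Fin.zero_le _)
    have h2 : 0 ≤ w 0 := (hWbound _ (hmemW _)).1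
    rw [ht] at h1
    linarith
  have hwlast : w (Fin.last (a+b+1)) = 1 := by
    obtain ⟨t, ht⟩ := h1mem
    have h1 : w t ≤ w (Fin.last (a+b+1)) := hmono (Fin.le_last _)
    have h2 : w (Fin.last (a+b+1)) ≤ 1 := (hWbound _ (hmemW _)).2
    rw [ht] at h1
    linarith
  exact ⟨w, hmono, hw0, hwlast, hmu, hmv⟩

/-- Hyperplanes are null for our measures. -/
lemma nk_hyperplane_null {d : ℕ} (μ : Measure (Fin d → ℝ)) [IsProbabilityMeasure μ]
    (hcube : μ (Set.pi Set.univ fun _ => Set.Icc (0:ℝ) 1) = 1)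
    (hfr : ∀ (a b : Fin d → ℝ),
      μ (frontier (Set.pi Set.univ fun j => Set.Icc (a j) (b j))) = 0)
    (j : Fin d) (r : ℝ) : μ {x | x j = r} = 0 := by
  set cube : Set (Fin d → ℝ) := Set.pi Set.univ fun _ => Set.Icc (0:ℝ) 1 with hc
  set av : Fin d → ℝ := fun j' => if j' = j then r else 0 with hav
  set bv : Fin d → ℝ := fun j' => if j' = j then r else 1 with hbv
  set D : Set (Fin d → ℝ) := Set.pi Set.univ fun j' => Set.Icc (av j') (bv j')
    with hD
  have hDclosed : IsClosed D := isClosed_set_pi fun j' _ => isClosed_Icc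
  have hDint : interior D = ∅ := by
    rw [hD, interior_pi_set Set.finite_univ]
    refine Set.univ_pi_eq_empty (i := j) ?_
    rw [interior_Icc, hav, hbv]
    simp
  have hDfr : frontier D = D := by
    rw [frontier, hDclosed.closure_eq, hDint, Set.diff_empty]
  have hD0 : μ D = 0 := by
    have := hfr av bv
    rw [← hD] at this
    rw [← hDfr]
    exact this
  have hcube0 : μ cubeᶜ = 0 := by
    have hm : MeasurableSet cube :=
      (isClosed_set_pi fun j' _ => isClosed_Icc).measurableSet
    rw [measure_compl hm (measure_ne_top μ _), hcube, measure_univ]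
    simp
  have hsub : {x : Fin d → ℝ | x j = r} ⊆ D ∪ cubeᶜ := by
    intro x hx
    by_cases hxc : x ∈ cube
    · left
      rw [hD]
      intro j' _
      rw [hav, hbv]
      by_cases h : j' = j
      · subst h
        have hx' : x j' = r := hx
        simp [hx']
      · simp only [if_neg h]
        exact hxc j' (Set.mem_univ _)
    · right; exact hxc
  have := measure_mono (μ := μ) hsub
  have h2 := measure_union_le (μ := μ) D cubeᶜ
  rw [hD0, hcube0] at h2
  simpa using le_antisymm (le_trans this (by simpa using h2)) zero_le

lemma nk_merge' {a b mm : ℕ} (hmm : a + b = mm) (u : Fin (a+2) → ℝ)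
    (v : Fin (b+2) → ℝ)
    (hu : Monotone u) (hv : Monotone v) (hu0 : u 0 = 0)
    (hul : u (Fin.last (a+1)) = 1)
    (hv0 : v 0 = 0) (hvl : v (Fin.last (b+1)) = 1) :
    ∃ w : Fin (mm + 2) → ℝ, Monotone w ∧ w 0 = 0 ∧
      w (Fin.last (mm + 1)) = 1 ∧
      (∀ q, ∃ t, w t = u q) ∧ (∀ q, ∃ t, w t = v q) := by
  subst hmm
  exact nk_merge u v hu hv hu0 hul hv0 hvl

end helpers

/-- The statement of the higher-dimensional splitting necklace theorem for a
given number `k` of thieves: for all `n`, `d`, all continuous probability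
measures on `[0,1]^d`, and all nonnegative `m₁,…,m_d` with `∑ mᵢ = n(k−1)`,
there is a fair division using `mᵢ` hyperplane cuts perpendicular to axis `i`. -/
def NecklaceThm (k : ℕ) : Prop :=
  ∀ (n d : ℕ), 1 ≤ n → 1 ≤ d →
    ∀ (μ : Fin n → Measure (Fin d → ℝ)),
      (∀ i, IsProbabilityMeasure (μ i)) →
      (∀ i, μ i (Set.pi Set.univ fun _ => Set.Icc (0:ℝ) 1) = 1) →
      (∀ i (a b : Fin d → ℝ),
        μ i (frontier (Set.pi Set.univ fun j => Set.Icc (a j) (b j))) = 0) →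
      ∀ m : Fin d → ℕ, (∑ i, m i = n * (k - 1)) →
        ∃ z : (i : Fin d) → Fin (m i + 2) → ℝ,
          (∀ i, Monotone (z i) ∧ z i 0 = 0 ∧ z i (Fin.last (m i + 1)) = 1) ∧
          ∃ ω : ((i : Fin d) → Fin (m i + 1)) → Fin k,
            ∀ i (c : Fin k),
              (μ i (⋃ 𝔧 ∈ {𝔧 : (i : Fin d) → Fin (m i + 1) | ω 𝔧 = c},
                Set.pi Set.univ fun j =>
                  Set.Icc (z j (𝔧 j).castSucc) (z j (𝔧 j).succ))).toReal
                = 1 / (k : ℝ)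

/-- **Reduction lemma.** If the higher-dimensional splitting necklace theorem
holds for `k₁ ≥ 2` and for `k₂ ≥ 2` thieves, then it holds for `k₁ * k₂`
thieves. -/
theorem necklace_reduction (k₁ k₂ : ℕ) (h₁ : 2 ≤ k₁) (h₂ : 2 ≤ k₂)
    (H₁ : NecklaceThm k₁) (H₂ : NecklaceThm k₂) : NecklaceThm (k₁ * k₂) := by
  classical
  intro n d hn hd μ hprob hcube hfr m hm
  have hk₁pos : 0 < k₁ := by omega
  have hk₂pos : 0 < k₂ := by omega
  -- split the cut numbers
  have hle : n * (k₁ - 1) ≤ ∑ i, m i := by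
    rw [hm]
    apply Nat.mul_le_mul_left
    have : k₁ * 2 ≤ k₁ * k₂ := Nat.mul_le_mul_left _ h₂
    omega
  obtain ⟨a, hab, hasum⟩ := nk_exists_le_sum m (n * (k₁ - 1)) hle
  set b : Fin d → ℕ := fun i => m i - a i with hbdef
  have hab' : ∀ j, a j + b j = m j := fun j => by
    simp only [hbdef]; have := hab j; omega
  have hbsum : ∑ i, b i = (n * k₁) * (k₂ - 1) := by
    have hs : ∑ i, a i + ∑ i, b i = ∑ i, m i := by
      rw [← Finset.sum_add_distrib]
      exact Finset.sum_congr rfl fun i _ => hab' i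
    rw [hasum, hm] at hs
    have h12 : k₁ * 2 ≤ k₁ * k₂ := Nat.mul_le_mul_left _ h₂
    zify [Nat.one_le_iff_ne_zero.mpr, show 1 ≤ k₁ from by omega,
      show 1 ≤ k₂ from by omega, show 1 ≤ k₁ * k₂ from by omega] at hs ⊢
    nlinarith [hs]
  -- apply the theorem for k₁
  obtain ⟨z₁, hz₁, ω₁, hω₁⟩ := H₁ n d hn hd μ hprob hcube hfr a hasum
  set cube : Set (Fin d → ℝ) := Set.pi Set.univ fun _ => Set.Icc (0:ℝ) 1
    with hcubedef
  set A : Fin k₁ → Set (Fin d → ℝ) := fun c =>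
    ⋃ 𝔧 ∈ {𝔧 : (i : Fin d) → Fin (a i + 1) | ω₁ 𝔧 = c},
      Set.pi Set.univ fun j =>
        Set.Icc (z₁ j (𝔧 j).castSucc) (z₁ j (𝔧 j).succ) with hAdef
  have hmeasA : ∀ c, MeasurableSet (A c) := by
    intro c
    exact MeasurableSet.biUnion (Set.to_countable _)
      (fun 𝔧 _ => (isClosed_set_pi fun j _ => isClosed_Icc).measurableSet)
  have hz₁mem : ∀ j q, 0 ≤ z₁ j q ∧ z₁ j q ≤ 1 := fun j q =>
    ⟨(hz₁ j).2.1 ▸ (hz₁ j).1 (Fin.zero_le _),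
     (hz₁ j).2.2 ▸ (hz₁ j).1 (Fin.le_last _)⟩
  have hAcube : ∀ c, A c ⊆ cube := by
    intro c
    refine Set.iUnion₂_subset fun 𝔧 _ => ?_
    refine Set.pi_mono fun j _ => ?_
    exact Set.Icc_subset_Icc (hz₁mem j _).1 (hz₁mem j _).2
  have hμA : ∀ i c, μ i (A c) = (k₁ : ℝ≥0∞)⁻¹ := by
    intro i c
    haveI := hprob i
    have h1 : (μ i (A c)).toReal = 1 / (k₁ : ℝ) := hω₁ i c
    have h2 : μ i (A c) = ENNReal.ofReal ((μ i (A c)).toReal) :=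
      (ENNReal.ofReal_toReal (measure_ne_top _ _)).symm
    rw [h2, h1, one_div, ENNReal.ofReal_inv_of_pos (by exact_mod_cast hk₁pos),
      ENNReal.ofReal_natCast]
  -- the conditional measures
  set e : Fin n × Fin k₁ ≃ Fin (n * k₁) := finProdFinEquiv with hedef
  set ν : Fin (n * k₁) → Measure (Fin d → ℝ) := fun t =>
    (k₁ : ℝ≥0∞) • (μ (e.symm t).1).restrict (A (e.symm t).2) with hνdef
  have hνapply : ∀ t (s : Set (Fin d → ℝ)), MeasurableSet s →
      ν t s = (k₁ : ℝ≥0∞) * μ (e.symm t).1 (s ∩ A (e.symm t).2) := by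
    intro t s hs
    rw [hνdef]
    simp only [Measure.smul_apply, smul_eq_mul]
    rw [Measure.restrict_apply hs]
  have hk₁E : (k₁ : ℝ≥0∞) * (k₁ : ℝ≥0∞)⁻¹ = 1 :=
    ENNReal.mul_inv_cancel (by exact_mod_cast hk₁pos.ne') (by simp)
  have hmeascube : MeasurableSet cube :=
    (isClosed_set_pi fun j _ => isClosed_Icc).measurableSet
  have hνprob : ∀ t, IsProbabilityMeasure (ν t) := by
    intro t
    constructor
    rw [hνapply t Set.univ MeasurableSet.univ, Set.univ_inter, hμA, hk₁E]
  have hνcube : ∀ t, ν t cube = 1 := by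
    intro t
    rw [hνapply t cube hmeascube,
      Set.inter_eq_self_of_subset_right (hAcube _), hμA, hk₁E]
  have hνfr : ∀ t (av bv : Fin d → ℝ),
      ν t (frontier (Set.pi Set.univ fun j => Set.Icc (av j) (bv j))) = 0 := by
    intro t av bv
    rw [hνapply t _ (isClosed_frontier.measurableSet)]
    have hle : μ (e.symm t).1
        (frontier (Set.pi Set.univ fun j => Set.Icc (av j) (bv j)) ∩
          A (e.symm t).2) = 0 :=
      le_antisymm (le_trans (measure_mono Set.inter_subset_left)
        (le_of_eq (hfr _ av bv))) zero_le
    rw [hle, mul_zero]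
  -- apply the theorem for k₂
  have hnk : 1 ≤ n * k₁ := Nat.one_le_iff_ne_zero.mpr (by positivity)
  obtain ⟨z₂, hz₂, ω₂, hω₂⟩ := H₂ (n * k₁) d hnk hd ν hνprob
    (fun t => hνcube t) (fun t => hνfr t) b hbsum
  set B : Fin k₂ → Set (Fin d → ℝ) := fun c =>
    ⋃ 𝔧 ∈ {𝔧 : (i : Fin d) → Fin (b i + 1) | ω₂ 𝔧 = c},
      Set.pi Set.univ fun j =>
        Set.Icc (z₂ j (𝔧 j).castSucc) (z₂ j (𝔧 j).succ) with hBdef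
  have hmeasB : ∀ c, MeasurableSet (B c) := by
    intro c
    exact MeasurableSet.biUnion (Set.to_countable _)
      (fun 𝔧 _ => (isClosed_set_pi fun j _ => isClosed_Icc).measurableSet)
  -- the key measure computation
  have hkey : ∀ i c₁ c₂, (μ i (A c₁ ∩ B c₂)).toReal = 1 / ((k₁ : ℝ) * k₂) := by
    intro i c₁ c₂
    haveI := hprob i
    have h1 : (ν (e (i, c₁)) (B c₂)).toReal = 1 / (k₂ : ℝ) := hω₂ (e (i, c₁)) c₂
    have h2 : ν (e (i, c₁)) (B c₂) = (k₁ : ℝ≥0∞) * μ i (A c₁ ∩ B c₂) := by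
      rw [hνapply _ _ (hmeasB c₂)]
      simp only [Equiv.symm_apply_apply]
      rw [Set.inter_comm]
    rw [h2, ENNReal.toReal_mul] at h1
    have h3 : ((k₁ : ℝ≥0∞)).toReal = (k₁ : ℝ) := by simp
    rw [h3] at h1
    have hk₁R : (0:ℝ) < k₁ := by exact_mod_cast hk₁pos
    have hk₂R : (0:ℝ) < k₂ := by exact_mod_cast hk₂pos
    field_simp at h1 ⊢
    linarith
  -- merge the cut structures
  have hall : ∀ j, ∃ w : Fin (m j + 2) → ℝ, Monotone w ∧ w 0 = 0 ∧
      w (Fin.last (m j + 1)) = 1 ∧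
      (∀ q, ∃ t, w t = z₁ j q) ∧ (∀ q, ∃ t, w t = z₂ j q) :=
    fun j => nk_merge' (hab' j) (z₁ j) (z₂ j) (hz₁ j).1 (hz₂ j).1
      (hz₁ j).2.1 (hz₁ j).2.2 (hz₂ j).2.1 (hz₂ j).2.2
  choose z hzmono hz0 hzl hzu hzv using hall
  -- decomposition maps
  have hdec1 : ∀ j (t : Fin (m j + 1)), ∃ q : Fin (a j + 1),
      z₁ j q.castSucc ≤ z j t.castSucc ∧ z j t.succ ≤ z₁ j q.succ :=
    fun j t => nk_decomp (hz₁ j).1 (hzmono j) (hz₁ j).2.1 (hz₁ j).2.2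
      (hz0 j) (hzl j) (hzu j) t
  have hdec2 : ∀ j (t : Fin (m j + 1)), ∃ q : Fin (b j + 1),
      z₂ j q.castSucc ≤ z j t.castSucc ∧ z j t.succ ≤ z₂ j q.succ :=
    fun j t => nk_decomp (hz₂ j).1 (hzmono j) (hz₂ j).2.1 (hz₂ j).2.2
      (hz0 j) (hzl j) (hzv j) t
  choose p₁ hp₁ using hdec1
  choose p₂ hp₂ using hdec2
  set ω : ((i : Fin d) → Fin (m i + 1)) → Fin (k₁ * k₂) := fun 𝔧 =>
    finProdFinEquiv (ω₁ (fun j => p₁ j (𝔧 j)), ω₂ (fun j => p₂ j (𝔧 j)))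
    with hωdef
  refine ⟨z, fun j => ⟨hzmono j, hz0 j, hzl j⟩, ω, ?_⟩
  intro i c
  haveI := hprob i
  set c₁ : Fin k₁ := (finProdFinEquiv.symm c).1 with hc₁
  set c₂ : Fin k₂ := (finProdFinEquiv.symm c).2 with hc₂
  set U : Set (Fin d → ℝ) :=
    ⋃ 𝔧 ∈ {𝔧 : (i : Fin d) → Fin (m i + 1) | ω 𝔧 = c},
      Set.pi Set.univ fun j => Set.Icc (z j (𝔧 j).castSucc) (z j (𝔧 j).succ)
    with hUdef
  have hωiff : ∀ 𝔧, ω 𝔧 = c ↔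
      (ω₁ (fun j => p₁ j (𝔧 j)) = c₁ ∧ ω₂ (fun j => p₂ j (𝔧 j)) = c₂) := by
    intro 𝔧
    constructor
    · intro h
      have h' := congrArg finProdFinEquiv.symm h
      rw [hωdef] at h'
      simp only [Equiv.symm_apply_apply] at h'
      exact ⟨by rw [hc₁, ← h'], by rw [hc₂, ← h']⟩
    · rintro ⟨ha, hb⟩
      rw [hωdef]
      simp only [ha, hb, hc₁, hc₂]
      exact finProdFinEquiv.apply_symm_apply c
  have hU1 : U ⊆ A c₁ ∩ B c₂ := by
    refine Set.iUnion₂_subset fun 𝔧 h𝔧 => ?_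
    obtain ⟨ha, hb⟩ := (hωiff 𝔧).mp h𝔧
    refine Set.subset_inter ?_ ?_
    · refine subset_trans (Set.pi_mono fun j _ =>
        Set.Icc_subset_Icc (hp₁ j (𝔧 j)).1 (hp₁ j (𝔧 j)).2) ?_
      exact Set.subset_biUnion_of_mem (u := fun 𝔞 => Set.pi Set.univ fun j =>
        Set.Icc (z₁ j (𝔞 j).castSucc) (z₁ j (𝔞 j).succ))
        (show (fun j => p₁ j (𝔧 j)) ∈ {𝔞 | ω₁ 𝔞 = c₁} from ha)
    · refine subset_trans (Set.pi_mono fun j _ =>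
        Set.Icc_subset_Icc (hp₂ j (𝔧 j)).1 (hp₂ j (𝔧 j)).2) ?_
      exact Set.subset_biUnion_of_mem (u := fun 𝔟 => Set.pi Set.univ fun j =>
        Set.Icc (z₂ j (𝔟 j).castSucc) (z₂ j (𝔟 j).succ))
        (show (fun j => p₂ j (𝔧 j)) ∈ {𝔟 | ω₂ 𝔟 = c₂} from hb)
  set N : Set (Fin d → ℝ) :=
    ⋃ (j : Fin d), ⋃ (t : Fin (m j + 2)), {x | x j = z j t} with hNdef
  have hN0 : μ i N = 0 :=
    measure_iUnion_null fun j => measure_iUnion_null fun t =>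
      nk_hyperplane_null (μ i) (hcube i) (hfr i) j (z j t)
  have hU2 : A c₁ ∩ B c₂ ⊆ U ∪ N := by
    intro x hx
    by_cases hxN : x ∈ N
    · exact Or.inr hxN
    left
    obtain ⟨hxA, hxB⟩ := hx
    have hxc : x ∈ cube := hAcube c₁ hxA
    have hxj : ∀ j, 0 ≤ x j ∧ x j ≤ 1 := fun j => by
      have := hxc j (Set.mem_univ j); simpa using this
    have hxne : ∀ j t, z j t ≠ x j := by
      intro j t h
      exact hxN (Set.mem_iUnion.mpr ⟨j, Set.mem_iUnion.mpr ⟨t,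
        show x ∈ {x | x j = z j t} from h.symm⟩⟩)
    have hfind : ∀ j, ∃ t : Fin (m j + 1),
        z j t.castSucc < x j ∧ x j < z j t.succ :=
      fun j => nk_find_cell (hzmono j) (hz0 j) (hzl j) (hxj j).1 (hxj j).2
        (hxne j)
    choose 𝔧 h𝔧 using hfind
    have hxbox : x ∈ Set.pi Set.univ fun j =>
        Set.Icc (z j (𝔧 j).castSucc) (z j (𝔧 j).succ) := by
      intro j _
      exact ⟨le_of_lt (h𝔧 j).1, le_of_lt (h𝔧 j).2⟩
    obtain ⟨𝔞, h𝔞S, hx𝔞⟩ := Set.mem_iUnion₂.mp hxA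
    obtain ⟨𝔟, h𝔟S, hx𝔟⟩ := Set.mem_iUnion₂.mp hxB
    -- strict containment in the coarse cells
    have hstr₁ : ∀ j, z₁ j (𝔞 j).castSucc < x j ∧ x j < z₁ j (𝔞 j).succ := by
      intro j
      have hmem := hx𝔞 j (Set.mem_univ j)
      obtain ⟨t₁, ht₁⟩ := hzu j ((𝔞 j).castSucc)
      obtain ⟨t₂, ht₂⟩ := hzu j ((𝔞 j).succ)
      exact ⟨lt_of_le_of_ne hmem.1 (ht₁ ▸ hxne j t₁),
        lt_of_le_of_ne hmem.2 (fun h => hxne j t₂ (ht₂.trans h.symm))⟩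
    have hstr₂ : ∀ j, z₂ j (𝔟 j).castSucc < x j ∧ x j < z₂ j (𝔟 j).succ := by
      intro j
      have hmem := hx𝔟 j (Set.mem_univ j)
      obtain ⟨t₁, ht₁⟩ := hzv j ((𝔟 j).castSucc)
      obtain ⟨t₂, ht₂⟩ := hzv j ((𝔟 j).succ)
      exact ⟨lt_of_le_of_ne hmem.1 (ht₁ ▸ hxne j t₁),
        lt_of_le_of_ne hmem.2 (fun h => hxne j t₂ (ht₂.trans h.symm))⟩
    have hπ₁ : (fun j => p₁ j (𝔧 j)) = 𝔞 := by
      funext j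
      refine nk_cell_unique (hz₁ j).1 ?_ ?_ (hstr₁ j).1 (hstr₁ j).2
      · exact lt_of_le_of_lt (hp₁ j (𝔧 j)).1 (h𝔧 j).1
      · exact lt_of_lt_of_le (h𝔧 j).2 (hp₁ j (𝔧 j)).2
    have hπ₂ : (fun j => p₂ j (𝔧 j)) = 𝔟 := by
      funext j
      refine nk_cell_unique (hz₂ j).1 ?_ ?_ (hstr₂ j).1 (hstr₂ j).2
      · exact lt_of_le_of_lt (hp₂ j (𝔧 j)).1 (h𝔧 j).1
      · exact lt_of_lt_of_le (h𝔧 j).2 (hp₂ j (𝔧 j)).2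
    have hωc : ω 𝔧 = c := (hωiff 𝔧).mpr ⟨hπ₁ ▸ h𝔞S, hπ₂ ▸ h𝔟S⟩
    exact Set.mem_biUnion (show 𝔧 ∈ {𝔧 | ω 𝔧 = c} from hωc) hxbox
  have hUeq : μ i U = μ i (A c₁ ∩ B c₂) := by
    refine le_antisymm (measure_mono hU1) ?_
    calc μ i (A c₁ ∩ B c₂) ≤ μ i (U ∪ N) := measure_mono hU2
      _ ≤ μ i U + μ i N := measure_union_le _ _
      _ = μ i U := by rw [hN0, add_zero]
  rw [hUeq, hkey i c₁ c₂]
  push_cast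
  ring
end

section
/- Let n ≥ 1, d ≥ 1, k₁, k₂ ≥ 2, and let m₁,…,m_d be nonnegative integers with ∑ᵢ mᵢ = n(k₁k₂ − 1). Then there exist nonnegative integers mᵢʲ for i = 1,…,d and j = 0,1,…,k₁ such that: ∑_{i=1}^d mᵢ⁰ = n(k₁ − 1); ∑_{i=1}^d mᵢʲ = n(k₂ − 1) for each j = 1,…,k₁; and ∑_{j=0}^{k₁} mᵢʲ = mᵢ for each i = 1,…,d. -/
/-
Distribute the `mᵢ` over a `d × (k₁ + 1)` table whose column sums are
`n(k₁ − 1), n(k₂ − 1), …, n(k₂ − 1)`. Such a table with prescribed nonnegative row and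
column sums exists as soon as both add up to the same total: fill the first row greedily
up to the column capacities and recurse on the remaining rows with the leftover capacities.
-/

open Finset

lemma Finset.exists_le_sum_eq {ι : Type*} (s : Finset ι) (t : ι → ℕ) {a : ℕ}
    (ha : a ≤ ∑ j ∈ s, t j) : ∃ r : ι → ℕ, r ≤ t ∧ ∑ j ∈ s, r j = a := by
  classical
  induction s using Finset.induction_on generalizing a with
  | empty => exact ⟨0, fun _ => Nat.zero_le _, by simp_all⟩
  | insert j s hj ih =>
    rw [sum_insert hj] at ha
    obtain ⟨r, hrt, hr⟩ := ih (a := a - min (t j) a) (by omega)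
    refine ⟨Function.update r j (min (t j) a), fun i => ?_, ?_⟩
    · rcases eq_or_ne i j with rfl | hij
      · simp
      · simpa [hij] using hrt i
    · rw [sum_insert hj, sum_update_of_notMem hj, Function.update_self, hr]
      omega

lemma Finset.exists_matrix_sum_eq {ι κ : Type*} [Fintype κ] (s : Finset ι) (m : ι → ℕ)
    (t : κ → ℕ) (h : ∑ i ∈ s, m i = ∑ j, t j) :
    ∃ a : ι → κ → ℕ, (∀ j, ∑ i ∈ s, a i j = t j) ∧ ∀ i ∈ s, ∑ j, a i j = m i := by
  classical
  induction s using Finset.induction_on generalizing t with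
  | empty =>
    refine ⟨0, fun j => ?_, by simp⟩
    simp only [sum_empty] at h ⊢
    exact (sum_eq_zero_iff.mp h.symm j (mem_univ j)).symm
  | insert i s hi ih =>
    rw [sum_insert hi] at h
    obtain ⟨r, hrt, hr⟩ := univ.exists_le_sum_eq t (a := m i) (by omega)
    have hleft : ∑ j, (t j - r j) = ∑ j, t j - ∑ j, r j :=
      sum_tsub_distrib _ fun j _ => hrt j
    obtain ⟨a, hcol, hrow⟩ := ih (fun j => t j - r j) (by omega)
    refine ⟨Function.update a i r, fun j => ?_, fun i' hi' => ?_⟩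
    · have hs : ∑ i' ∈ s, Function.update a i r i' j = t j - r j := by
        rw [← hcol j]
        exact sum_congr rfl fun i' hi' => by
          rw [Function.update_of_ne (ne_of_mem_of_not_mem hi' hi)]
      rw [sum_insert hi, Function.update_self, hs, Nat.add_sub_cancel' (hrt j)]
    · rcases mem_insert.mp hi' with rfl | hi'
      · simpa using hr
      · rw [Function.update_of_ne (ne_of_mem_of_not_mem hi' hi), hrow i' hi']

lemma Nat.mul_sub_one_add_mul_mul_sub_one (n k₁ : ℕ) {k₂ : ℕ} (h₂ : 1 ≤ k₂) :
    n * (k₁ - 1) + k₁ * (n * (k₂ - 1)) = n * (k₁ * k₂ - 1) := by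
  obtain ⟨b, rfl⟩ := Nat.exists_eq_add_of_le' h₂
  rcases k₁ with _ | a
  · simp
  · rw [show (a + 1) * (b + 1) - 1 = a * b + a + b by rw [Nat.sub_eq_of_eq_add]; ring]
    simp only [Nat.add_sub_cancel]
    ring

theorem necklace_arithmetic_lemma_general (n d k₁ k₂ : ℕ)
    (h₂ : 2 ≤ k₂) (m : Fin d → ℕ)
    (hm : ∑ i, m i = n * (k₁ * k₂ - 1)) :
    ∃ m' : Fin d → Fin (k₁ + 1) → ℕ,
      (∑ i, m' i 0 = n * (k₁ - 1)) ∧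
      (∀ j : Fin (k₁ + 1), j ≠ 0 → ∑ i, m' i j = n * (k₂ - 1)) ∧
      (∀ i, ∑ j, m' i j = m i) := by
  let t : Fin (k₁ + 1) → ℕ := Fin.cons (n * (k₁ - 1)) fun _ => n * (k₂ - 1)
  have ht : ∑ j, t j = n * (k₁ * k₂ - 1) := by
    simp only [t, Fin.sum_cons, sum_const, card_univ, Fintype.card_fin, smul_eq_mul]
    exact Nat.mul_sub_one_add_mul_mul_sub_one n k₁ (by omega)
  obtain ⟨a, hcol, hrow⟩ := univ.exists_matrix_sum_eq m t (hm.trans ht.symm)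
  refine ⟨a, hcol 0, fun j hj => ?_, fun i => hrow i (mem_univ i)⟩
  obtain ⟨j, rfl⟩ := Fin.eq_succ_of_ne_zero hj
  exact hcol j.succ

/-- **Arithmetic lemma** for the reduction of the splitting necklace theorem from
`k = k₁k₂` to its factors: numbers `mᵢ ≥ 0` with `∑ mᵢ = n(k₁k₂ − 1)` can be
split as `mᵢ = ∑_{j=0}^{k₁} mᵢʲ` with `∑ᵢ mᵢ⁰ = n(k₁ − 1)` and
`∑ᵢ mᵢʲ = n(k₂ − 1)` for each `j = 1,…,k₁`. -/
theorem necklace_arithmetic_lemma (n d k₁ k₂ : ℕ) (hn : 1 ≤ n) (hd : 1 ≤ d)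
    (h₁ : 2 ≤ k₁) (h₂ : 2 ≤ k₂) (m : Fin d → ℕ)
    (hm : ∑ i, m i = n * (k₁ * k₂ - 1)) :
    ∃ m' : Fin d → Fin (k₁ + 1) → ℕ,
      (∑ i, m' i 0 = n * (k₁ - 1)) ∧
      (∀ j : Fin (k₁ + 1), j ≠ 0 → ∑ i, m' i j = n * (k₂ - 1)) ∧
      (∀ i, ∑ j, m' i j = m i) :=
  necklace_arithmetic_lemma_general n d k₁ k₂ h₂ m hm
end

section
/- Let d ≥ 1 and let μ be a finite signed Borel measure on [0,1]^d satisfying μ(∂Q) = 0 for every axis-parallel parallelepiped Q ⊆ [0,1]^d. Then the function assigning to a point 𝔱 = (t₁,…,t_d) ∈ Δ_{m₁} × ⋯ × Δ_{m_d} and an index 𝔧 the measure μ(R_𝔧(𝔱)) of the elementary parallelepiped R_𝔧(𝔱) is continuous in 𝔱, and vanishes whenever R_𝔧(𝔱) is degenerate. -/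
open MeasureTheory

noncomputable section

/-- The `j`-th partition point `x_j = t₀ + ⋯ + t_{j−1}` of `[0,1]` determined
by barycentric coordinates `t ∈ Δ_m`. -/
def cutPoint {m : ℕ} (t : Fin (m + 1) → ℝ) (j : ℕ) : ℝ :=
  ∑ l ∈ Finset.univ.filter (fun l : Fin (m + 1) => (l : ℕ) < j), t l

/-- The elementary parallelepiped `R_𝔧(𝔱) = ∏ᵢ [x^i_{jᵢ}, x^i_{jᵢ+1}]` of the
`𝔪`-subdivision of `[0,1]^d` given by `𝔱 ∈ Δ_{m₁} × ⋯ × Δ_{m_d}`. -/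
def elemBox {d : ℕ} (m : Fin d → ℕ) (𝔧 : (i : Fin d) → Fin (m i + 1))
    (𝔱 : (i : Fin d) → ↥(stdSimplex ℝ (Fin (m i + 1)))) : Set (Fin d → ℝ) :=
  Set.pi Set.univ fun i =>
    Set.Icc (cutPoint (𝔱 i : Fin (m i + 1) → ℝ) (𝔧 i))
      (cutPoint (𝔱 i : Fin (m i + 1) → ℝ) (𝔧 i + 1))

namespace BoxAux

open Set Filter Topology

variable {d : ℕ}

/-- An axis-parallel closed box. -/
def box (a b : Fin d → ℝ) : Set (Fin d → ℝ) :=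
  Set.pi Set.univ fun i => Set.Icc (a i) (b i)

lemma box_meas (a b : Fin d → ℝ) : MeasurableSet (box a b) :=
  MeasurableSet.univ_pi fun _ => measurableSet_Icc

lemma box_closed (a b : Fin d → ℝ) : IsClosed (box a b) :=
  isClosed_set_pi fun i _ => isClosed_Icc

lemma interior_box (a b : Fin d → ℝ) :
    interior (box a b) = Set.pi Set.univ fun i => Set.Ioo (a i) (b i) := by
  rw [box, interior_pi_set finite_univ]
  simp [interior_Icc]

lemma frontier_box (a b : Fin d → ℝ) :
    frontier (box a b) = box a b \ Set.pi Set.univ fun i => Set.Ioo (a i) (b i) := by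
  rw [(box_closed a b).frontier_eq, interior_box]

section Degenerate

variable (μ : SignedMeasure (Fin d → ℝ))
/-- A degenerate box has signed measure zero. -/
lemma measure_degenerate (hbd : ∀ a b : Fin d → ℝ, μ (frontier (box a b)) = 0)
    {a b : Fin d → ℝ} {i₀ : Fin d} (h : b i₀ ≤ a i₀) :
    μ (box a b) = 0 := by
  have hio : Set.Ioo (a i₀) (b i₀) = ∅ := Set.Ioo_eq_empty (not_lt.2 h)
  have hfr : frontier (box a b) = box a b := by
    rw [frontier_box, Set.univ_pi_eq_empty (t := fun i => Set.Ioo (a i) (b i)) hio, Set.diff_empty]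
  rw [← hfr]
  exact hbd a b

/-- The collection of closed intervals of `ℝ`. -/
def IccSet : Set (Set ℝ) := {S | ∃ p q : ℝ, S = Set.Icc p q}

lemma generateFrom_IccSet :
    MeasurableSpace.generateFrom IccSet = (inferInstance : MeasurableSpace ℝ) := by
  apply le_antisymm
  · exact MeasurableSpace.generateFrom_le (by rintro _ ⟨p, q, rfl⟩; exact measurableSet_Icc)
  · conv_lhs => rw [BorelSpace.measurable_eq (α := ℝ), borel_eq_generateFrom_Iic ℝ]
    refine MeasurableSpace.generateFrom_le ?_
    rintro _ ⟨q, rfl⟩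
    have hq : Set.Iic q = ⋃ n : ℕ, Set.Icc (q - n) q := by
      ext x
      simp only [Set.mem_Iic, Set.mem_iUnion, Set.mem_Icc]
      constructor
      · intro h
        obtain ⟨n, hn⟩ := exists_nat_ge (q - x)
        exact ⟨n, by linarith, h⟩
      · rintro ⟨n, _, h2⟩; exact h2
    rw [hq]
    exact MeasurableSet.iUnion fun n =>
      MeasurableSpace.measurableSet_generateFrom ⟨_, _, rfl⟩

lemma IccSet_spanning : IsCountablySpanning IccSet := by
  refine ⟨fun n => Set.Icc (-(n : ℝ)) n, fun n => ⟨_, _, rfl⟩, ?_⟩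
  ext x
  simp only [Set.mem_iUnion, Set.mem_Icc, Set.mem_univ, iff_true]
  obtain ⟨n, hn⟩ := exists_nat_ge |x|
  obtain ⟨h1, h2⟩ := abs_le.1 hn
  exact ⟨n, h1, h2⟩

/-- The π-system of closed boxes in `ℝ^d`. -/
def Boxes (d : ℕ) : Set (Set (Fin d → ℝ)) :=
  Set.pi Set.univ '' Set.pi Set.univ (fun _ : Fin d => IccSet)

lemma isPiSystem_Boxes : IsPiSystem (Boxes d) := by
  rintro S ⟨s, hs, rfl⟩ T ⟨t, ht, rfl⟩ -
  refine ⟨fun i => s i ∩ t i, fun i _ => ?_, by rw [← Set.pi_inter_distrib]⟩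
  show s i ∩ t i ∈ IccSet
  obtain ⟨p, q, hpq⟩ := hs i (Set.mem_univ i)
  obtain ⟨r, u, hru⟩ := ht i (Set.mem_univ i)
  rw [hpq, hru, Set.Icc_inter_Icc]
  exact ⟨_, _, rfl⟩

lemma generateFrom_Boxes :
    MeasurableSpace.generateFrom (Boxes d) = (inferInstance : MeasurableSpace (Fin d → ℝ)) :=
  generateFrom_eq_pi (fun _ => generateFrom_IccSet) fun _ => IccSet_spanning

lemma signed_apply (s : Set (Fin d → ℝ)) (hs : MeasurableSet s) :
    μ s = (μ.toJordanDecomposition.posPart s).toReal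
      - (μ.toJordanDecomposition.negPart s).toReal := by
  conv_lhs => rw [← μ.toSignedMeasure_toJordanDecomposition]
  rw [JordanDecomposition.toSignedMeasure, Measure.toSignedMeasure_sub_apply hs]
  rfl

/-- The total variation of `μ` vanishes on degenerate boxes. -/
lemma tv_degenerate (hbd : ∀ a b : Fin d → ℝ, μ (frontier (box a b)) = 0)
    {a b : Fin d → ℝ} {i₀ : Fin d} (h : b i₀ ≤ a i₀) :
    μ.totalVariation (box a b) = 0 := by
  set P := μ.toJordanDecomposition.posPart with hP
  set N := μ.toJordanDecomposition.negPart with hN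
  set F := box a b with hF
  have hFm : MeasurableSet F := box_meas a b
  have key : ∀ c e : Fin d → ℝ, P (box c e ∩ F) = N (box c e ∩ F) := by
    intro c e
    have hbox : box c e ∩ F = box (fun i => c i ⊔ a i) (fun i => e i ⊓ b i) := by
      rw [hF, box, box, box, ← Set.pi_inter_distrib]
      refine Set.pi_congr rfl fun i _ => Set.Icc_inter_Icc
    have hdeg : (fun i => e i ⊓ b i) i₀ ≤ (fun i => c i ⊔ a i) i₀ :=
      le_trans inf_le_right (le_trans h le_sup_right)
    have h0 : μ (box c e ∩ F) = 0 := by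
      rw [hbox]; exact measure_degenerate μ hbd hdeg
    rw [signed_apply μ _ ((box_meas c e).inter hFm), sub_eq_zero] at h0
    exact (ENNReal.toReal_eq_toReal_iff' (measure_ne_top _ _) (measure_ne_top _ _)).1 h0
  have hPN : P.restrict F = N.restrict F := by
    refine ext_of_generate_finite (Boxes d) generateFrom_Boxes.symm isPiSystem_Boxes ?_ ?_
    · rintro S ⟨s, hs, rfl⟩
      choose p q hpq using fun i => hs i (Set.mem_univ i)
      have hSbox : Set.pi Set.univ s = box p q := by
        refine Set.pi_congr rfl fun i _ => hpq i
      rw [hSbox, Measure.restrict_apply (box_meas p q), Measure.restrict_apply (box_meas p q)]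
      exact key p q
    · rw [Measure.restrict_apply_univ, Measure.restrict_apply_univ]
      have := key a b
      rwa [← hF, Set.inter_self] at this
  have hsing : P.restrict F ⟂ₘ N.restrict F :=
    μ.toJordanDecomposition.mutuallySingular.mono Measure.restrict_le_self
      Measure.restrict_le_self
  rw [hPN] at hsing
  have hN0 : N.restrict F = 0 := (Measure.MutuallySingular.self_iff _).1 hsing
  have hNF : N F = 0 := by
    have := congrArg (fun ν : Measure (Fin d → ℝ) => ν Set.univ) hN0
    simpa [Measure.restrict_apply_univ] using this
  have hPF : P F = 0 := by
    have := congrArg (fun ν : Measure (Fin d → ℝ) => ν Set.univ) (hPN.trans hN0)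
    simpa [Measure.restrict_apply_univ] using this
  show (SignedMeasure.totalVariation μ) F = 0
  rw [SignedMeasure.totalVariation, Measure.add_apply]
  rw [← hP, ← hN, hPF, hNF, add_zero]

/-- The total variation of `μ` vanishes on frontiers of boxes. -/
lemma tv_frontier (hbd : ∀ a b : Fin d → ℝ, μ (frontier (box a b)) = 0) (a b : Fin d → ℝ) : μ.totalVariation (frontier (box a b)) = 0 := by
  have hsub : frontier (box a b) ⊆
      ⋃ i : Fin d, (box a (Function.update b i (a i)) ∪ box (Function.update a i (b i)) b) := by
    rw [frontier_box]
    rintro x ⟨hx, hx2⟩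
    have hx' : ∀ i, a i ≤ x i ∧ x i ≤ b i := fun i => hx i (Set.mem_univ i)
    have : ∃ i, ¬ (a i < x i ∧ x i < b i) := by
      by_contra hc
      push_neg at hc
      exact hx2 fun i _ => hc i
    obtain ⟨i, hi⟩ := this
    have hcase : x i = a i ∨ x i = b i := by
      rcases lt_or_ge (a i) (x i) with h1 | h1
      · right
        have : ¬ x i < b i := fun h2 => hi ⟨h1, h2⟩
        exact le_antisymm (hx' i).2 (not_lt.1 this)
      · left; exact le_antisymm h1 (hx' i).1
    refine Set.mem_iUnion.2 ⟨i, ?_⟩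
    rcases hcase with hc | hc
    · left
      intro j _
      simp only [Set.mem_Icc]
      rcases eq_or_ne j i with rfl | hj
      · rw [Function.update_self]
        exact ⟨(hx' j).1, le_of_eq hc⟩
      · rw [Function.update_of_ne hj]
        exact hx' j
    · right
      intro j _
      simp only [Set.mem_Icc]
      rcases eq_or_ne j i with rfl | hj
      · rw [Function.update_self]
        exact ⟨ge_of_eq hc, (hx' j).2⟩
      · rw [Function.update_of_ne hj]
        exact hx' j
  refine measure_mono_null hsub (measure_iUnion_null fun i => measure_union_null ?_ ?_)
  · exact tv_degenerate μ hbd (i₀ := i) (by rw [Function.update_self])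
  · exact tv_degenerate μ hbd (i₀ := i) (by rw [Function.update_self])

/-- A shrinking shell around the box `[a, b]`. -/
def shell (a b : Fin d → ℝ) (n : ℕ) : Set (Fin d → ℝ) :=
  box (fun i => a i - 1 / (n + 1)) (fun i => b i + 1 / (n + 1)) \
    box (fun i => a i + 1 / (n + 1)) (fun i => b i - 1 / (n + 1))

lemma shell_meas (a b : Fin d → ℝ) (n : ℕ) : MeasurableSet (shell a b n) :=
  (box_meas _ _).diff (box_meas _ _)

lemma eps_pos (n : ℕ) : (0 : ℝ) < 1 / (n + 1) := by positivity

lemma shell_antitone (a b : Fin d → ℝ) : Antitone (shell a b) := by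
  intro n m hnm x hx
  have hle : (1 : ℝ) / (m + 1) ≤ 1 / (n + 1) := by
    apply one_div_le_one_div_of_le
    · positivity
    · have : (n : ℝ) ≤ m := Nat.cast_le.2 hnm
      linarith
  obtain ⟨hxO, hxI⟩ := hx
  constructor
  · intro i _
    have := hxO i (Set.mem_univ i)
    simp only [Set.mem_Icc] at this ⊢
    constructor <;> [linarith [this.1]; linarith [this.2]]
  · intro hxI'
    apply hxI
    intro i _
    have := hxI' i (Set.mem_univ i)
    simp only [Set.mem_Icc] at this ⊢
    constructor <;> [linarith [this.1]; linarith [this.2]]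

lemma iInter_shell [Nonempty (Fin d)] (a b : Fin d → ℝ) :
    ⋂ n, shell a b n = frontier (box a b) := by
  rw [frontier_box]
  ext x
  simp only [Set.mem_iInter, shell, Set.mem_diff]
  constructor
  · intro h
    have h1 : ∀ i, a i ≤ x i ∧ x i ≤ b i := by
      intro i
      constructor
      · by_contra hc
        push_neg at hc
        obtain ⟨n, hn⟩ := exists_nat_one_div_lt (show (0 : ℝ) < a i - x i by linarith)
        have h2 := (h n).1 i (Set.mem_univ i)
        simp only [Set.mem_Icc] at h2
        have := h2.1
        have hc' : (1 : ℝ) / (n + 1) < a i - x i := hn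
        linarith
      · by_contra hc
        push_neg at hc
        obtain ⟨n, hn⟩ := exists_nat_one_div_lt (show (0 : ℝ) < x i - b i by linarith)
        have h2 := (h n).1 i (Set.mem_univ i)
        simp only [Set.mem_Icc] at h2
        have := h2.2
        have hc' : (1 : ℝ) / (n + 1) < x i - b i := hn
        linarith
    refine ⟨fun i _ => Set.mem_Icc.2 (h1 i), ?_⟩
    intro hIoo
    have h2 : ∀ i, a i < x i ∧ x i < b i := by
      intro i
      have := hIoo i (Set.mem_univ i)
      simpa using this
    set ε : ℝ := Finset.univ.inf' Finset.univ_nonempty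
      (fun i : Fin d => min (x i - a i) (b i - x i)) with hε
    have hεpos : 0 < ε := by
      rw [hε]
      apply Finset.lt_inf'_iff _ |>.2
      intro i _
      exact lt_min (by linarith [(h2 i).1]) (by linarith [(h2 i).2])
    obtain ⟨n, hn⟩ := exists_nat_one_div_lt hεpos
    refine (h n).2 ?_
    intro i _
    have hεle : ε ≤ min (x i - a i) (b i - x i) :=
      Finset.inf'_le _ (Finset.mem_univ i)
    have h3 : ε ≤ x i - a i := le_trans hεle (min_le_left _ _)
    have h4 : ε ≤ b i - x i := le_trans hεle (min_le_right _ _)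
    simp only [Set.mem_Icc]
    constructor <;> linarith
  · rintro ⟨hx, hx2⟩ n
    have hx' : ∀ i, a i ≤ x i ∧ x i ≤ b i := fun i => hx i (Set.mem_univ i)
    constructor
    · intro i _
      have := eps_pos n
      simp only [Set.mem_Icc]
      constructor <;> [linarith [(hx' i).1]; linarith [(hx' i).2]]
    · intro hxI
      apply hx2
      intro i _
      have := hxI i (Set.mem_univ i)
      simp only [Set.mem_Icc] at this
      have hp := eps_pos n
      simp only [Set.mem_Ioo]
      constructor <;> [linarith [this.1]; linarith [this.2]]

lemma tv_finite : IsFiniteMeasure μ.totalVariation := by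
  rw [SignedMeasure.totalVariation]
  infer_instance

lemma tendsto_tv_shell [Nonempty (Fin d)]
    (hbd : ∀ a b : Fin d → ℝ, μ (frontier (box a b)) = 0) (a b : Fin d → ℝ) :
    Tendsto (fun n => μ.totalVariation (shell a b n)) atTop (𝓝 0) := by
  haveI := tv_finite μ
  have h := tendsto_measure_iInter_atTop (μ := μ.totalVariation)
      (fun n => (shell_meas a b n).nullMeasurableSet) (shell_antitone a b)
      ⟨0, measure_ne_top _ _⟩
  rwa [iInter_shell, tv_frontier μ hbd a b] at h

lemma abs_le_tv (s : Set (Fin d → ℝ)) (hs : MeasurableSet s) :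
    |μ s| ≤ (μ.totalVariation s).toReal := by
  rw [signed_apply μ s hs, SignedMeasure.totalVariation, Measure.add_apply,
    ENNReal.toReal_add (measure_ne_top _ _) (measure_ne_top _ _)]
  have h1 := ENNReal.toReal_nonneg (a := μ.toJordanDecomposition.posPart s)
  have h2 := ENNReal.toReal_nonneg (a := μ.toJordanDecomposition.negPart s)
  rw [abs_le]
  constructor <;> linarith

lemma G_cont [Nonempty (Fin d)]
    (hbd : ∀ a b : Fin d → ℝ, μ (frontier (box a b)) = 0) :
    Continuous (fun p : (Fin d → ℝ) × (Fin d → ℝ) => μ (box p.1 p.2)) := by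
  haveI := tv_finite μ
  rw [Metric.continuous_iff]
  rintro ⟨a, b⟩ ε hε
  have hten := tendsto_tv_shell μ hbd a b
  have hev : ∀ᶠ n in atTop, μ.totalVariation (shell a b n) < ENNReal.ofReal (ε / 2) :=
    hten.eventually_lt_const (by simp [ENNReal.ofReal_pos]; linarith)
  obtain ⟨n, hn⟩ := hev.exists
  refine ⟨1 / (n + 1), eps_pos n, ?_⟩
  rintro ⟨a', b'⟩ hq
  set δ : ℝ := 1 / (n + 1) with hδdef
  have hδ : 0 < δ := eps_pos n
  rw [Prod.dist_eq, max_lt_iff] at hq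
  have ha : ∀ i, |a' i - a i| < δ := by
    intro i
    have := (dist_pi_lt_iff hδ).1 hq.1 i
    rwa [Real.dist_eq] at this
  have hb : ∀ i, |b' i - b i| < δ := by
    intro i
    have := (dist_pi_lt_iff hδ).1 hq.2 i
    rwa [Real.dist_eq] at this
  set I : Set (Fin d → ℝ) := box (fun i => a i + δ) (fun i => b i - δ) with hI
  have hIB : I ⊆ box a b := by
    intro x hx i _
    have := hx i (Set.mem_univ i)
    simp only [Set.mem_Icc] at this ⊢
    constructor <;> [linarith [this.1]; linarith [this.2]]
  have hIB' : I ⊆ box a' b' := by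
    intro x hx i _
    have := hx i (Set.mem_univ i)
    have h1 := abs_lt.1 (ha i)
    have h2 := abs_lt.1 (hb i)
    simp only [Set.mem_Icc] at this ⊢
    constructor <;> [linarith [this.1]; linarith [this.2]]
  have hBsh : box a b \ I ⊆ shell a b n := by
    rintro x ⟨hx, hxI⟩
    refine ⟨?_, hxI⟩
    intro i _
    have := hx i (Set.mem_univ i)
    simp only [Set.mem_Icc] at this ⊢
    constructor <;> [linarith [this.1]; linarith [this.2]]
  have hB'sh : box a' b' \ I ⊆ shell a b n := by
    rintro x ⟨hx, hxI⟩
    refine ⟨?_, hxI⟩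
    intro i _
    have := hx i (Set.mem_univ i)
    have h1 := abs_lt.1 (ha i)
    have h2 := abs_lt.1 (hb i)
    simp only [Set.mem_Icc] at this ⊢
    constructor <;> [linarith [this.1]; linarith [this.2]]
  have hd1 : μ (box a b \ I) = μ (box a b) - μ I :=
    VectorMeasure.of_diff (box_meas _ _) (box_meas _ _) hIB
  have hd2 : μ (box a' b' \ I) = μ (box a' b') - μ I :=
    VectorMeasure.of_diff (box_meas _ _) (box_meas _ _) hIB'
  have htv : (μ.totalVariation (shell a b n)).toReal < ε / 2 := by
    rw [← ENNReal.lt_ofReal_iff_toReal_lt (measure_ne_top _ _)]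
    exact hn
  have hbound : ∀ s : Set (Fin d → ℝ), MeasurableSet s → s ⊆ shell a b n →
      |μ s| < ε / 2 := by
    intro s hs hsub
    refine lt_of_le_of_lt (abs_le_tv μ s hs) (lt_of_le_of_lt ?_ htv)
    exact ENNReal.toReal_mono (measure_ne_top _ _) (measure_mono hsub)
  have h1 := hbound _ ((box_meas a b).diff (box_meas _ _)) hBsh
  have h2 := hbound _ ((box_meas a' b').diff (box_meas _ _)) hB'sh
  rw [hd1] at h1
  rw [hd2] at h2
  rw [Real.dist_eq]
  have e1 := abs_lt.1 h1
  have e2 := abs_lt.1 h2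
  rw [abs_lt]
  constructor <;> linarith

end Degenerate

lemma cutPoint_succ {m : ℕ} (t : Fin (m + 1) → ℝ) (j : Fin (m + 1)) :
    cutPoint t ((j : ℕ) + 1) = cutPoint t (j : ℕ) + t j := by
  unfold cutPoint
  have hset : Finset.univ.filter (fun l : Fin (m + 1) => (l : ℕ) < (j : ℕ) + 1)
      = insert j (Finset.univ.filter fun l : Fin (m + 1) => (l : ℕ) < (j : ℕ)) := by
    ext l
    simp only [Finset.mem_filter, Finset.mem_univ, true_and, Finset.mem_insert,
      Nat.lt_succ_iff_lt_or_eq, Fin.ext_iff]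
    tauto
  rw [hset, Finset.sum_insert (by simp)]
  ring

lemma cutPoint_cont {d : ℕ} (m : Fin d → ℕ) (i : Fin d) (j : ℕ) :
    Continuous (fun 𝔱 : (i : Fin d) → ↥(stdSimplex ℝ (Fin (m i + 1))) =>
      cutPoint (𝔱 i : Fin (m i + 1) → ℝ) j) := by
  unfold cutPoint
  refine continuous_finset_sum _ fun l _ => ?_
  exact ((continuous_apply l).comp continuous_subtype_val).comp (continuous_apply i)

end BoxAux

/-- **Continuity of box measures.**  Let `μ` be a finite signed Borel measure on
`[0,1]^d` with `μ(∂Q) = 0` for every axis-parallel parallelepiped `Q`.  Then for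
each index `𝔧`, the map `𝔱 ↦ μ(R_𝔧(𝔱))` is continuous on
`Δ_{m₁} × ⋯ × Δ_{m_d}`, and it vanishes whenever `R_𝔧(𝔱)` is degenerate. -/
theorem signedMeasure_box_continuous (d : ℕ) (hd : 1 ≤ d)
    (μ : MeasureTheory.SignedMeasure (Fin d → ℝ))
    (hbd : ∀ a b : Fin d → ℝ,
      μ (frontier (Set.pi Set.univ fun i => Set.Icc (a i) (b i))) = 0)
    (m : Fin d → ℕ) (𝔧 : (i : Fin d) → Fin (m i + 1)) :
    Continuous (fun 𝔱 : (i : Fin d) → ↥(stdSimplex ℝ (Fin (m i + 1))) =>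
      μ (elemBox m 𝔧 𝔱)) ∧
    ∀ 𝔱 : (i : Fin d) → ↥(stdSimplex ℝ (Fin (m i + 1))),
      (∃ i, (𝔱 i : Fin (m i + 1) → ℝ) (𝔧 i) = 0) → μ (elemBox m 𝔧 𝔱) = 0 := by
  haveI : Nonempty (Fin d) := ⟨⟨0, hd⟩⟩
  have hbd' : ∀ a b : Fin d → ℝ, μ (frontier (BoxAux.box a b)) = 0 := hbd
  constructor
  · have hG := BoxAux.G_cont μ hbd'
    have hA : Continuous (fun 𝔱 : (i : Fin d) → ↥(stdSimplex ℝ (Fin (m i + 1))) =>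
        (fun i => cutPoint (𝔱 i : Fin (m i + 1) → ℝ) (𝔧 i),
         fun i => cutPoint (𝔱 i : Fin (m i + 1) → ℝ) (𝔧 i + 1))) := by
      refine Continuous.prodMk ?_ ?_ <;>
        exact continuous_pi fun i => BoxAux.cutPoint_cont m i _
    have := hG.comp hA
    exact this
  · rintro 𝔱 ⟨i, hi⟩
    have hle : cutPoint (𝔱 i : Fin (m i + 1) → ℝ) ((𝔧 i : ℕ) + 1)
        ≤ cutPoint (𝔱 i : Fin (m i + 1) → ℝ) (𝔧 i) := by
      rw [BoxAux.cutPoint_succ _ (𝔧 i), hi, add_zero]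
    exact BoxAux.measure_degenerate μ hbd'
      (a := fun i => cutPoint (𝔱 i : Fin (m i + 1) → ℝ) (𝔧 i))
      (b := fun i => cutPoint (𝔱 i : Fin (m i + 1) → ℝ) (𝔧 i + 1))
      (i₀ := i) hle

end
end

section
/- Let μ₁,…,μₙ be continuous probability measures on [0,1]^d, let p be prime, and suppose m₁ + ⋯ + m_d = n(p−1). Define f : Ω(m₁,…,m_d;ℤ/p) → E by f(𝔱,ω) = the n×p matrix whose (j,i) entry is μⱼ(Aᵢ(𝔱,ω)) − 1/p, where Aᵢ(𝔱,ω) is the union of elementary parallelepipeds of the partition 𝔱 colored i by ω, and E is the space of real n×p matrices with all row sums zero, with ℤ/p acting by cyclic column permutation. Then f is well-defined, continuous, and ℤ/p-equivariant, and any zero of f yields a fair division of the cube into pieces of measure 1/p for each μⱼ and each of the p thieves. -/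
open MeasureTheory

noncomputable section

/-- The identification defining `Ω(𝔪;G)`. -/
def omegaRel {d : ℕ} (m : Fin d → ℕ) (G : Type*)
    (a b : ((i : Fin d) → ↥(stdSimplex ℝ (Fin (m i + 1)))) ×
      (((i : Fin d) → Fin (m i + 1)) → G)) : Prop :=
  a.1 = b.1 ∧ ∀ 𝔧 : (i : Fin d) → Fin (m i + 1), a.2 𝔧 ≠ b.2 𝔧 →
    ∃ i, (a.1 i : Fin (m i + 1) → ℝ) (𝔧 i) = 0

/-- The configuration space `Ω(m₁,…,m_d;G)`. -/
def OmegaG {d : ℕ} (m : Fin d → ℕ) (G : Type*) : Type _ :=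
  Quot (omegaRel m G)

instance {d : ℕ} (m : Fin d → ℕ) (G : Type*) : TopologicalSpace (OmegaG m G) :=
  letI : TopologicalSpace G := ⊥
  instTopologicalSpaceQuot

/-- The union `A_c(𝔱,ω)` of the elementary parallelepipeds of the subdivision
`𝔱` colored `c` by `ω`. -/
def colorClass {d : ℕ} (m : Fin d → ℕ) {G : Type*}
    (𝔱 : (i : Fin d) → ↥(stdSimplex ℝ (Fin (m i + 1))))
    (ω : ((i : Fin d) → Fin (m i + 1)) → G) (c : G) : Set (Fin d → ℝ) :=
  ⋃ 𝔧 ∈ {𝔧 | ω 𝔧 = c}, elemBox m 𝔧 𝔱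

/-! ### Auxiliary material -/

section Aux

open Set Filter Topology

variable {d : ℕ}

/-- An axis-parallel closed box. -/
abbrev nBox (a b : Fin d → ℝ) : Set (Fin d → ℝ) :=
  Set.pi Set.univ fun i => Set.Icc (a i) (b i)

lemma isClosed_nBox (a b : Fin d → ℝ) : IsClosed (nBox a b) :=
  isClosed_set_pi fun _ _ => isClosed_Icc

lemma interior_nBox (a b : Fin d → ℝ) :
    interior (nBox a b) = Set.pi Set.univ fun i => Set.Ioo (a i) (b i) := by
  rw [nBox, interior_pi_set Set.finite_univ]
  simp [Function.comp]

lemma nBox_subset {a b a' b' : Fin d → ℝ} (h1 : ∀ i, a i ≤ a' i) (h2 : ∀ i, b' i ≤ b i) :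
    nBox a' b' ⊆ nBox a b := fun x hx i hi =>
  ⟨(h1 i).trans (hx i hi).1, (hx i hi).2.trans (h2 i)⟩

lemma nBox_null {ν : Measure (Fin d → ℝ)}
    (hc : ∀ a b : Fin d → ℝ, ν (frontier (nBox a b)) = 0)
    {a b : Fin d → ℝ} (i : Fin d) (h : a i = b i) : ν (nBox a b) = 0 := by
  have hint : interior (nBox a b) = ∅ := by
    rw [interior_nBox]
    exact Set.univ_pi_eq_empty (i := i) (by rw [h]; exact Set.Ioo_self _)
  have hfr : frontier (nBox a b) = nBox a b := by
    rw [(isClosed_nBox a b).frontier_eq, hint, Set.diff_empty]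
  rw [← hfr]; exact hc a b

/-- Continuity of the box-measure function for a measure vanishing on box frontiers. -/
lemma continuous_nBox_measure (ν : Measure (Fin d → ℝ)) [IsFiniteMeasure ν]
    (hc : ∀ a b : Fin d → ℝ, ν (frontier (nBox a b)) = 0) :
    Continuous fun q : (Fin d → ℝ) × (Fin d → ℝ) => (ν (nBox q.1 q.2)).toReal := by
  rw [Metric.continuous_iff]
  rintro ⟨a, b⟩ ε hε
  have hposk : ∀ k : ℕ, (0:ℝ) < 1 / (k + 1) := fun k => by positivity
  have hmono1 : ∀ {k k' : ℕ}, k ≤ k' → (1 : ℝ) / (k' + 1) ≤ 1 / (k + 1) := by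
    intro k k' h
    apply one_div_le_one_div_of_le (by positivity)
    have : (k : ℝ) ≤ k' := by exact_mod_cast h
    linarith
  -- enlarged boxes
  have hSanti : Antitone fun k : ℕ =>
      nBox (fun i => a i - 1 / (k + 1)) (fun i => b i + 1 / (k + 1)) := by
    intro k k' h
    exact nBox_subset (fun i => by have := hmono1 h; linarith)
      (fun i => by have := hmono1 h; linarith)
  have hSint : (⋂ k : ℕ, nBox (fun i => a i - 1 / (k + 1)) (fun i => b i + 1 / (k + 1)))
      = nBox a b := by
    apply Set.Subset.antisymm
    · intro x hx i _
      constructor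
      · by_contra hlt
        push_neg at hlt
        obtain ⟨k, hk⟩ := exists_nat_one_div_lt (by linarith : (0:ℝ) < a i - x i)
        have h1 := (Set.mem_iInter.1 hx k i (Set.mem_univ i)).1
        simp only at h1
        linarith
      · by_contra hlt
        push_neg at hlt
        obtain ⟨k, hk⟩ := exists_nat_one_div_lt (by linarith : (0:ℝ) < x i - b i)
        have h1 := (Set.mem_iInter.1 hx k i (Set.mem_univ i)).2
        simp only at h1
        linarith
    · intro x hx
      refine Set.mem_iInter.2 fun k i hi => ?_
      have h := hx i hi
      have := hposk k
      exact ⟨by linarith [h.1], by linarith [h.2]⟩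
  have hStend : Filter.Tendsto
      (fun k : ℕ => (ν (nBox (fun i => a i - 1 / (k + 1)) (fun i => b i + 1 / (k + 1)))).toReal)
      Filter.atTop (nhds ((ν (nBox a b)).toReal)) := by
    have h0 := tendsto_measure_iInter_atTop (μ := ν)
      (s := fun k : ℕ => nBox (fun i => a i - 1 / (k + 1)) (fun i => b i + 1 / (k + 1)))
      (fun k => ((isClosed_nBox _ _).measurableSet).nullMeasurableSet)
      hSanti ⟨0, measure_ne_top ν _⟩
    rw [hSint] at h0
    exact (ENNReal.tendsto_toReal (measure_ne_top ν _)).comp h0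
  -- shrunk boxes
  have hUmono : Monotone fun k : ℕ =>
      nBox (fun i => a i + 1 / (k + 1)) (fun i => b i - 1 / (k + 1)) := by
    intro k k' h
    exact nBox_subset (fun i => by have := hmono1 h; linarith)
      (fun i => by have := hmono1 h; linarith)
  have hUuni : (⋃ k : ℕ, nBox (fun i => a i + 1 / (k + 1)) (fun i => b i - 1 / (k + 1)))
      = Set.pi Set.univ fun i => Set.Ioo (a i) (b i) := by
    apply Set.Subset.antisymm
    · intro x hx
      obtain ⟨k, hk⟩ := Set.mem_iUnion.1 hx
      intro i hi
      have h := hk i hi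
      simp only at h
      have := hposk k
      exact ⟨by linarith [h.1], by linarith [h.2]⟩
    · intro x hx
      have hchoice : ∀ i : Fin d, ∃ k : ℕ, 1 / ((k:ℝ) + 1) < min (x i - a i) (b i - x i) := by
        intro i
        have h := hx i (Set.mem_univ i)
        exact exists_nat_one_div_lt (lt_min (by linarith [h.1]) (by linarith [h.2]))
      choose K hK using hchoice
      refine Set.mem_iUnion.2 ⟨Finset.univ.sup K, fun i _ => ?_⟩
      have h1 : (1:ℝ) / (Finset.univ.sup K + 1) ≤ 1 / (K i + 1) :=
        hmono1 (Finset.le_sup (Finset.mem_univ i))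
      have h3 := lt_min_iff.1 (hK i)
      exact ⟨by linarith [h3.1], by linarith [h3.2]⟩
  have hIoo : ν (Set.pi Set.univ fun i => Set.Ioo (a i) (b i)) = ν (nBox a b) := by
    refine le_antisymm (measure_mono (Set.pi_mono fun i _ => Set.Ioo_subset_Icc_self)) ?_
    have hsub : nBox a b ⊆
        (Set.pi Set.univ fun i => Set.Ioo (a i) (b i)) ∪ frontier (nBox a b) := by
      intro x hx
      by_cases hxi : x ∈ interior (nBox a b)
      · left; rwa [interior_nBox] at hxi
      · right; rw [(isClosed_nBox a b).frontier_eq]; exact ⟨hx, hxi⟩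
    calc ν (nBox a b) ≤ _ := measure_mono hsub
      _ ≤ ν (Set.pi Set.univ fun i => Set.Ioo (a i) (b i)) + ν (frontier (nBox a b)) :=
        measure_union_le _ _
      _ = ν (Set.pi Set.univ fun i => Set.Ioo (a i) (b i)) := by rw [hc, add_zero]
  have hUtend : Filter.Tendsto
      (fun k : ℕ => (ν (nBox (fun i => a i + 1 / (k + 1)) (fun i => b i - 1 / (k + 1)))).toReal)
      Filter.atTop (nhds ((ν (nBox a b)).toReal)) := by
    have h0 := tendsto_measure_iUnion_atTop (μ := ν) hUmono
    rw [hUuni, hIoo] at h0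
    exact (ENNReal.tendsto_toReal (measure_ne_top ν _)).comp h0
  obtain ⟨K, hK1, hK2⟩ : ∃ k : ℕ,
      (ν (nBox (fun i => a i - 1 / (k + 1)) (fun i => b i + 1 / (k + 1)))).toReal
        < (ν (nBox a b)).toReal + ε ∧
      (ν (nBox a b)).toReal - ε
        < (ν (nBox (fun i => a i + 1 / (k + 1)) (fun i => b i - 1 / (k + 1)))).toReal := by
    have h1 := hStend.eventually_lt_const (by linarith :
      (ν (nBox a b)).toReal < (ν (nBox a b)).toReal + ε)
    have h2 := hUtend.eventually_const_lt (by linarith :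
      (ν (nBox a b)).toReal - ε < (ν (nBox a b)).toReal)
    exact (h1.and h2).exists
  refine ⟨1 / (K + 1), hposk K, ?_⟩
  rintro ⟨a', b'⟩ hdist
  rw [Prod.dist_eq, max_lt_iff] at hdist
  have hda : ∀ i, |a' i - a i| < 1 / (K + 1) := fun i => by
    have := (dist_pi_lt_iff (hposk K)).1 hdist.1 i
    rwa [Real.dist_eq] at this
  have hdb : ∀ i, |b' i - b i| < 1 / (K + 1) := fun i => by
    have := (dist_pi_lt_iff (hposk K)).1 hdist.2 i
    rwa [Real.dist_eq] at this
  have hsub1 : nBox a' b' ⊆ nBox (fun i => a i - 1 / (K + 1)) (fun i => b i + 1 / (K + 1)) :=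
    nBox_subset
      (fun i => by have := abs_sub_lt_iff.1 (hda i); linarith [this.2])
      (fun i => by have := abs_sub_lt_iff.1 (hdb i); linarith [this.1])
  have hsub2 : nBox (fun i => a i + 1 / (K + 1)) (fun i => b i - 1 / (K + 1)) ⊆ nBox a' b' :=
    nBox_subset
      (fun i => by have := abs_sub_lt_iff.1 (hda i); linarith [this.1])
      (fun i => by have := abs_sub_lt_iff.1 (hdb i); linarith [this.2])
  have hle1 : (ν (nBox a' b')).toReal
      ≤ (ν (nBox (fun i => a i - 1 / (K + 1)) (fun i => b i + 1 / (K + 1)))).toReal :=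
    ENNReal.toReal_mono (measure_ne_top ν _) (measure_mono hsub1)
  have hle2 : (ν (nBox (fun i => a i + 1 / (K + 1)) (fun i => b i - 1 / (K + 1)))).toReal
      ≤ (ν (nBox a' b')).toReal :=
    ENNReal.toReal_mono (measure_ne_top ν _) (measure_mono hsub2)
  rw [Real.dist_eq, abs_sub_lt_iff]
  constructor <;> linarith

/-! ### Cut points -/

lemma cutPoint_zero {m' : ℕ} (t : Fin (m' + 1) → ℝ) : cutPoint t 0 = 0 := by
  simp [cutPoint]

lemma cutPoint_mono {m' : ℕ} {t : Fin (m' + 1) → ℝ} (ht : ∀ l, 0 ≤ t l) :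
    Monotone fun j => cutPoint t j := by
  intro j j' h
  apply Finset.sum_le_sum_of_subset_of_nonneg
  · intro l hl
    simp only [Finset.mem_filter, Finset.mem_univ, true_and] at hl ⊢
    omega
  · exact fun l _ _ => ht l

lemma cutPoint_succ {m' : ℕ} (t : Fin (m' + 1) → ℝ) (j : Fin (m' + 1)) :
    cutPoint t ((j : ℕ) + 1) = cutPoint t (j : ℕ) + t j := by
  have hset : (Finset.univ.filter fun l : Fin (m' + 1) => (l : ℕ) < (j : ℕ) + 1)
      = insert j (Finset.univ.filter fun l : Fin (m' + 1) => (l : ℕ) < (j : ℕ)) := by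
    ext l
    simp only [Finset.mem_filter, Finset.mem_univ, true_and, Finset.mem_insert]
    constructor
    · intro hl
      rcases Nat.lt_succ_iff_lt_or_eq.1 hl with h | h
      · exact Or.inr h
      · exact Or.inl (Fin.ext h)
    · rintro (rfl | h) <;> omega
  unfold cutPoint
  rw [hset, Finset.sum_insert (by simp)]
  ring

lemma cutPoint_last {m' : ℕ} {t : Fin (m' + 1) → ℝ} (ht : ∑ l, t l = 1) :
    cutPoint t (m' + 1) = 1 := by
  unfold cutPoint
  rw [Finset.filter_true_of_mem (fun l _ => l.isLt)]
  exact ht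

lemma continuous_cutPoint {m' : ℕ} (j : ℕ) :
    Continuous fun t : ↥(stdSimplex ℝ (Fin (m' + 1))) =>
      cutPoint (t : Fin (m' + 1) → ℝ) j := by
  unfold cutPoint
  exact continuous_finset_sum _ fun l _ => (continuous_apply l).comp continuous_subtype_val

lemma elemBox_eq (m : Fin d → ℕ) (𝔧 : (i : Fin d) → Fin (m i + 1))
    (𝔱 : (i : Fin d) → ↥(stdSimplex ℝ (Fin (m i + 1)))) :
    elemBox m 𝔧 𝔱 = nBox (fun i => cutPoint (𝔱 i : Fin (m i + 1) → ℝ) (𝔧 i))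
      (fun i => cutPoint (𝔱 i : Fin (m i + 1) → ℝ) ((𝔧 i : ℕ) + 1)) := rfl

lemma measurable_elemBox (m : Fin d → ℕ) (𝔧 : (i : Fin d) → Fin (m i + 1))
    (𝔱 : (i : Fin d) → ↥(stdSimplex ℝ (Fin (m i + 1)))) :
    MeasurableSet (elemBox m 𝔧 𝔱) := by
  rw [elemBox_eq]; exact (isClosed_nBox _ _).measurableSet

lemma elemBox_null_of_degenerate {ν : Measure (Fin d → ℝ)}
    (hc : ∀ a b : Fin d → ℝ, ν (frontier (nBox a b)) = 0)
    {m : Fin d → ℕ} {𝔧 : (i : Fin d) → Fin (m i + 1)}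
    {𝔱 : (i : Fin d) → ↥(stdSimplex ℝ (Fin (m i + 1)))} {i : Fin d}
    (h : (𝔱 i : Fin (m i + 1) → ℝ) (𝔧 i) = 0) : ν (elemBox m 𝔧 𝔱) = 0 := by
  rw [elemBox_eq]
  refine nBox_null hc i ?_
  show cutPoint (𝔱 i : Fin (m i + 1) → ℝ) (𝔧 i) = cutPoint (𝔱 i : Fin (m i + 1) → ℝ) ((𝔧 i : ℕ) + 1)
  rw [cutPoint_succ _ (𝔧 i), h, add_zero]

lemma elemBox_inter_null_aux {ν : Measure (Fin d → ℝ)}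
    (hc : ∀ a b : Fin d → ℝ, ν (frontier (nBox a b)) = 0)
    {m : Fin d → ℕ} {𝔧 𝔧' : (i : Fin d) → Fin (m i + 1)} {i : Fin d}
    (h : (𝔧 i : ℕ) < (𝔧' i : ℕ))
    (𝔱 : (i : Fin d) → ↥(stdSimplex ℝ (Fin (m i + 1)))) :
    ν (elemBox m 𝔧 𝔱 ∩ elemBox m 𝔧' 𝔱) = 0 := by
  classical
  set c : ℝ := cutPoint (𝔱 i : Fin (m i + 1) → ℝ) (𝔧' i) with hc'
  set u : Fin d → ℝ := fun k =>
    if k = i then c else cutPoint (𝔱 k : Fin (m k + 1) → ℝ) (𝔧 k) with hu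
  set v : Fin d → ℝ := fun k =>
    if k = i then c else cutPoint (𝔱 k : Fin (m k + 1) → ℝ) ((𝔧 k : ℕ) + 1) with hv
  have hnull : ν (nBox u v) = 0 := nBox_null hc i (by simp [hu, hv])
  refine measure_mono_null ?_ hnull
  rintro x ⟨hx1, hx2⟩ k _
  by_cases hk : k = i
  · subst hk
    have h1 : x k ≤ cutPoint (𝔱 k : Fin (m k + 1) → ℝ) ((𝔧 k : ℕ) + 1) :=
      (hx1 k (Set.mem_univ k)).2
    have h2 : c ≤ x k := (hx2 k (Set.mem_univ k)).1
    have h3 : cutPoint (𝔱 k : Fin (m k + 1) → ℝ) ((𝔧 k : ℕ) + 1) ≤ c :=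
      cutPoint_mono (fun l => (𝔱 k).2.1 l) (by omega)
    have hxk : x k = c := le_antisymm (h1.trans h3) h2
    simp [hu, hv, hxk]
  · have hh := hx1 k (Set.mem_univ k)
    simpa [hu, hv, hk] using hh

lemma elemBox_inter_null {ν : Measure (Fin d → ℝ)}
    (hc : ∀ a b : Fin d → ℝ, ν (frontier (nBox a b)) = 0)
    {m : Fin d → ℕ} {𝔧 𝔧' : (i : Fin d) → Fin (m i + 1)} (hne : 𝔧 ≠ 𝔧')
    (𝔱 : (i : Fin d) → ↥(stdSimplex ℝ (Fin (m i + 1)))) :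
    ν (elemBox m 𝔧 𝔱 ∩ elemBox m 𝔧' 𝔱) = 0 := by
  obtain ⟨i, hi⟩ := Function.ne_iff.1 hne
  rcases Nat.lt_or_ge (𝔧 i : ℕ) (𝔧' i : ℕ) with h | h
  · exact elemBox_inter_null_aux hc h 𝔱
  · have h' : (𝔧' i : ℕ) < (𝔧 i : ℕ) := by
      rcases Nat.lt_or_ge (𝔧' i : ℕ) (𝔧 i : ℕ) with h' | h'
      · exact h'
      · exact absurd (Fin.ext (le_antisymm h h')) (Ne.symm hi)
    rw [Set.inter_comm]
    exact elemBox_inter_null_aux hc h' 𝔱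

lemma measurable_colorClass {G : Type*} (m : Fin d → ℕ)
    (𝔱 : (i : Fin d) → ↥(stdSimplex ℝ (Fin (m i + 1))))
    (ω : ((i : Fin d) → Fin (m i + 1)) → G) (c : G) :
    MeasurableSet (colorClass m 𝔱 ω c) :=
  MeasurableSet.biUnion (Set.to_countable _) fun 𝔧 _ => measurable_elemBox m 𝔧 𝔱

lemma colorClass_eq_biUnion {G : Type*} [DecidableEq G] (m : Fin d → ℕ)
    (𝔱 : (i : Fin d) → ↥(stdSimplex ℝ (Fin (m i + 1))))
    (ω : ((i : Fin d) → Fin (m i + 1)) → G) (c : G) :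
    colorClass m 𝔱 ω c
      = ⋃ 𝔧 ∈ Finset.univ.filter (fun 𝔧 => ω 𝔧 = c), elemBox m 𝔧 𝔱 := by
  unfold colorClass
  ext x
  simp

lemma measure_colorClass {ν : Measure (Fin d → ℝ)}
    (hc : ∀ a b : Fin d → ℝ, ν (frontier (nBox a b)) = 0)
    {G : Type*} [DecidableEq G] (m : Fin d → ℕ)
    (𝔱 : (i : Fin d) → ↥(stdSimplex ℝ (Fin (m i + 1))))
    (ω : ((i : Fin d) → Fin (m i + 1)) → G) (c : G) :
    ν (colorClass m 𝔱 ω c)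
      = ∑ 𝔧 ∈ Finset.univ.filter (fun 𝔧 => ω 𝔧 = c), ν (elemBox m 𝔧 𝔱) := by
  rw [colorClass_eq_biUnion]
  refine measure_biUnion_finset₀ ?_ fun 𝔧 _ => (measurable_elemBox m 𝔧 𝔱).nullMeasurableSet
  intro 𝔧 _ 𝔧' _ hne
  exact elemBox_inter_null hc hne 𝔱

lemma measure_colorClass_congr {ν : Measure (Fin d → ℝ)}
    (hc : ∀ a b : Fin d → ℝ, ν (frontier (nBox a b)) = 0)
    {G : Type*} (m : Fin d → ℕ)
    (𝔱 : (i : Fin d) → ↥(stdSimplex ℝ (Fin (m i + 1))))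
    {ω ω' : ((i : Fin d) → Fin (m i + 1)) → G}
    (h : ∀ 𝔧, ω 𝔧 ≠ ω' 𝔧 → ∃ i, (𝔱 i : Fin (m i + 1) → ℝ) (𝔧 i) = 0) (c : G) :
    ν (colorClass m 𝔱 ω c) = ν (colorClass m 𝔱 ω' c) := by
  have hN : ν (⋃ 𝔧 ∈ {𝔧 | ω 𝔧 ≠ ω' 𝔧}, elemBox m 𝔧 𝔱) = 0 := by
    rw [measure_biUnion_null_iff (Set.to_countable _)]
    rintro 𝔧 h𝔧
    obtain ⟨i, hi⟩ := h 𝔧 h𝔧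
    exact elemBox_null_of_degenerate hc hi
  refine measure_congr (MeasureTheory.ae_eq_set.2 ⟨?_, ?_⟩)
  · refine measure_mono_null ?_ hN
    rintro x ⟨hx, hx'⟩
    obtain ⟨𝔧, h𝔧, hmem⟩ := Set.mem_iUnion₂.1 hx
    by_cases he : ω 𝔧 = ω' 𝔧
    · exact absurd (Set.mem_iUnion₂.2 ⟨𝔧, show ω' 𝔧 = c by rw [← he]; exact h𝔧, hmem⟩) hx'
    · exact Set.mem_iUnion₂.2 ⟨𝔧, he, hmem⟩
  · refine measure_mono_null ?_ hN
    rintro x ⟨hx, hx'⟩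
    obtain ⟨𝔧, h𝔧, hmem⟩ := Set.mem_iUnion₂.1 hx
    by_cases he : ω 𝔧 = ω' 𝔧
    · exact absurd (Set.mem_iUnion₂.2 ⟨𝔧, show ω 𝔧 = c by rw [he]; exact h𝔧, hmem⟩) hx'
    · exact Set.mem_iUnion₂.2 ⟨𝔧, he, hmem⟩

lemma exists_cut {m' : ℕ} (t : ↥(stdSimplex ℝ (Fin (m' + 1)))) {x : ℝ}
    (h0 : 0 ≤ x) (h1 : x ≤ 1) :
    ∃ j : Fin (m' + 1), cutPoint (t : Fin (m' + 1) → ℝ) (j : ℕ) ≤ x ∧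
      x ≤ cutPoint (t : Fin (m' + 1) → ℝ) ((j : ℕ) + 1) := by
  classical
  have hmono := cutPoint_mono (t := (t : Fin (m' + 1) → ℝ)) t.2.1
  set S : Finset (Fin (m' + 1)) :=
    Finset.univ.filter fun j : Fin (m' + 1) =>
      cutPoint (t : Fin (m' + 1) → ℝ) (j : ℕ) ≤ x with hS
  have hne : S.Nonempty := by
    refine ⟨0, ?_⟩
    simp only [hS, Finset.mem_filter, Finset.mem_univ, true_and]
    simpa [cutPoint_zero] using h0
  set j₀ := S.max' hne with hj₀
  have hj₀S : j₀ ∈ S := S.max'_mem hne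
  have hle : cutPoint (t : Fin (m' + 1) → ℝ) (j₀ : ℕ) ≤ x := by
    simpa [hS] using hj₀S
  by_cases hcase : x ≤ cutPoint (t : Fin (m' + 1) → ℝ) ((j₀ : ℕ) + 1)
  · exact ⟨j₀, hle, hcase⟩
  · push_neg at hcase
    by_cases htop : (j₀ : ℕ) = m'
    · exfalso
      have hlast : cutPoint (t : Fin (m' + 1) → ℝ) (m' + 1) = 1 := cutPoint_last t.2.2
      rw [htop] at hcase
      linarith
    · exfalso
      have hlt : (j₀ : ℕ) + 1 < m' + 1 := by have := j₀.isLt; omega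
      have hj₁S : (⟨(j₀ : ℕ) + 1, hlt⟩ : Fin (m' + 1)) ∈ S := by
        simp only [hS, Finset.mem_filter, Finset.mem_univ, true_and]
        exact le_of_lt hcase
      have hle' := S.le_max' _ hj₁S
      rw [← hj₀] at hle'
      have : (j₀ : ℕ) + 1 ≤ (j₀ : ℕ) := hle'
      omega

lemma cube_subset_union (m : Fin d → ℕ)
    (𝔱 : (i : Fin d) → ↥(stdSimplex ℝ (Fin (m i + 1)))) :
    (Set.pi Set.univ fun _ : Fin d => Set.Icc (0:ℝ) 1)
      ⊆ ⋃ 𝔧 : (i : Fin d) → Fin (m i + 1), elemBox m 𝔧 𝔱 := by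
  intro x hx
  have h : ∀ i, ∃ j : Fin (m i + 1),
      cutPoint (𝔱 i : Fin (m i + 1) → ℝ) (j : ℕ) ≤ x i ∧
      x i ≤ cutPoint (𝔱 i : Fin (m i + 1) → ℝ) ((j : ℕ) + 1) :=
    fun i => exists_cut (𝔱 i) (hx i (Set.mem_univ i)).1 (hx i (Set.mem_univ i)).2
  choose 𝔧 h𝔧 using h
  exact Set.mem_iUnion.2 ⟨𝔧, fun i _ => ⟨(h𝔧 i).1, (h𝔧 i).2⟩⟩

lemma continuous_of_discrete_snd {X Y Z : Type*} [TopologicalSpace X] [TopologicalSpace Y]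
    [DiscreteTopology Y] [TopologicalSpace Z] {F : X × Y → Z}
    (h : ∀ y, Continuous fun x => F (x, y)) : Continuous F := by
  rw [continuous_iff_continuousAt]
  rintro ⟨x, y⟩
  have hev : ∀ᶠ q : X × Y in nhds (x, y), F q = F (q.1, y) := by
    have hop : IsOpen {q : X × Y | q.2 = y} :=
      (isOpen_discrete ({y} : Set Y)).preimage continuous_snd
    filter_upwards [hop.mem_nhds rfl] with q hq
    rw [show q = (q.1, y) from Prod.ext rfl hq]
  exact (((h y).comp continuous_fst).continuousAt).congr (hev.mono fun q hq => hq.symm)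

end Aux

set_option maxHeartbeats 1000000 in
/-- **The test map of the higher-dimensional necklace theorem.**  For continuous
probability measures `μ₁,…,μₙ` on `[0,1]^d`, `p` prime and `∑ mᵢ = n(p−1)`,
the assignment `(𝔱,ω) ↦ (μⱼ(A_c(𝔱,ω)) − 1/p)_{j,c}` descends to a well-defined
continuous map `f` on `Ω(𝔪;ℤ/p)` with values in the `ℤ/p`-representation `E` of
real `n×p` matrices with zero row sums (`ℤ/p` acting by cyclic column
permutation), f is ℤ/p-equivariant, and any zero of `f` is a fair division:
all `n·p` values `μⱼ(A_c)` equal `1/p`. -/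
theorem necklace_test_map (n d p : ℕ) (hn : 1 ≤ n) (hd : 1 ≤ d)
    [Fact p.Prime]
    (μ : Fin n → Measure (Fin d → ℝ)) [∀ j, IsProbabilityMeasure (μ j)]
    (hprob : ∀ j, μ j (Set.pi Set.univ fun _ => Set.Icc (0:ℝ) 1) = 1)
    (hcont : ∀ j (a b : Fin d → ℝ),
      μ j (frontier (Set.pi Set.univ fun i => Set.Icc (a i) (b i))) = 0)
    (m : Fin d → ℕ) (hm : ∑ i, m i = n * (p - 1)) :
    ∃ f : OmegaG m (ZMod p) → (Fin n → ZMod p → ℝ),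
      -- `f` is well defined on the quotient by the defining formula
      (∀ 𝔱 ω, f (Quot.mk _ (𝔱, ω)) =
        fun j c => (μ j (colorClass m 𝔱 ω c)).toReal - 1 / (p : ℝ)) ∧
      -- `f` is continuous
      Continuous f ∧
      -- `f` takes values in `E`: all row sums vanish
      (∀ x j, ∑ c : ZMod p, f x j c = 0) ∧
      -- `f` is `ℤ/p`-equivariant for cyclic column permutation
      (∀ (g : ZMod p) 𝔱 ω j c,
        f (Quot.mk _ (𝔱, fun 𝔧 => g + ω 𝔧)) j c =
          f (Quot.mk _ (𝔱, ω)) j (c - g)) ∧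
      -- a zero of `f` is a fair division
      (∀ 𝔱 ω, f (Quot.mk _ (𝔱, ω)) = 0 →
        ∀ j c, (μ j (colorClass m 𝔱 ω c)).toReal = 1 / (p : ℝ)) := by
  classical
  have hp : p.Prime := Fact.out
  haveI : NeZero p := ⟨hp.ne_zero⟩
  have hresp : ∀ a b, omegaRel m (ZMod p) a b →
      (fun x : ((i : Fin d) → ↥(stdSimplex ℝ (Fin (m i + 1)))) ×
          (((i : Fin d) → Fin (m i + 1)) → ZMod p) =>
        fun j c => (μ j (colorClass m x.1 x.2 c)).toReal - 1 / (p : ℝ)) a =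
      (fun x => fun j c => (μ j (colorClass m x.1 x.2 c)).toReal - 1 / (p : ℝ)) b := by
    rintro ⟨𝔱, ω⟩ ⟨𝔱', ω'⟩ ⟨h1, h2⟩
    simp only at h1 h2 ⊢
    subst h1
    funext j c
    rw [measure_colorClass_congr (hcont j) m 𝔱 h2 c]
  refine ⟨Quot.lift _ hresp, fun 𝔱 ω => rfl, ?_, ?_, ?_, ?_⟩
  · -- continuity
    letI : TopologicalSpace (ZMod p) := ⊥
    haveI : DiscreteTopology (ZMod p) := ⟨rfl⟩
    refine continuous_quot_lift hresp ?_
    refine continuous_pi fun j => continuous_pi fun c => Continuous.sub ?_ continuous_const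
    refine continuous_of_discrete_snd fun ω => ?_
    have heq : (fun 𝔱 : (i : Fin d) → ↥(stdSimplex ℝ (Fin (m i + 1))) =>
          (μ j (colorClass m 𝔱 ω c)).toReal)
        = fun 𝔱 => ∑ 𝔧 ∈ Finset.univ.filter (fun 𝔧 => ω 𝔧 = c),
            (μ j (elemBox m 𝔧 𝔱)).toReal := by
      funext 𝔱
      rw [measure_colorClass (hcont j)]
      exact ENNReal.toReal_sum fun 𝔧 _ => measure_ne_top _ _
    rw [heq]
    refine continuous_finset_sum _ fun 𝔧 _ => ?_
    have hpair : Continuous fun 𝔱 : (i : Fin d) → ↥(stdSimplex ℝ (Fin (m i + 1))) =>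
        ((fun i => cutPoint (𝔱 i : Fin (m i + 1) → ℝ) (𝔧 i),
          fun i => cutPoint (𝔱 i : Fin (m i + 1) → ℝ) ((𝔧 i : ℕ) + 1)) :
          (Fin d → ℝ) × (Fin d → ℝ)) :=
      Continuous.prodMk
        (continuous_pi fun i => (continuous_cutPoint _).comp (continuous_apply i))
        (continuous_pi fun i => (continuous_cutPoint _).comp (continuous_apply i))
    have h2 := (continuous_nBox_measure (μ j) (hcont j)).comp hpair
    refine h2.congr fun 𝔱 => ?_
    rfl
  · -- row sums vanish
    intro x j
    induction x using Quot.ind with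
    | mk a =>
      obtain ⟨𝔱, ω⟩ := a
      have hAE : Set.Pairwise ↑(Finset.univ : Finset (ZMod p))
          (Function.onFun (MeasureTheory.AEDisjoint (μ j)) fun c => colorClass m 𝔱 ω c) := by
        intro c _ c' _ hcc
        have hsub : colorClass m 𝔱 ω c ∩ colorClass m 𝔱 ω c' ⊆
            ⋃ (𝔧 : (i : Fin d) → Fin (m i + 1)) (𝔧' : (i : Fin d) → Fin (m i + 1))
              (_ : 𝔧 ≠ 𝔧'), elemBox m 𝔧 𝔱 ∩ elemBox m 𝔧' 𝔱 := by
          rintro x ⟨hx1, hx2⟩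
          obtain ⟨𝔧, h𝔧, hm1⟩ := Set.mem_iUnion₂.1 hx1
          obtain ⟨𝔧', h𝔧', hm2⟩ := Set.mem_iUnion₂.1 hx2
          have hne : 𝔧 ≠ 𝔧' := fun he => hcc (by
            rw [show c = ω 𝔧 from h𝔧.symm, he, h𝔧'])
          exact Set.mem_iUnion.2 ⟨𝔧, Set.mem_iUnion.2 ⟨𝔧',
            Set.mem_iUnion.2 ⟨hne, hm1, hm2⟩⟩⟩
        refine measure_mono_null hsub ?_
        refine measure_iUnion_null fun 𝔧 => measure_iUnion_null fun 𝔧' =>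
          measure_iUnion_null fun hne => elemBox_inter_null (hcont j) hne 𝔱
      have hsum : ∑ c : ZMod p, μ j (colorClass m 𝔱 ω c)
          = μ j (⋃ c ∈ (Finset.univ : Finset (ZMod p)), colorClass m 𝔱 ω c) :=
        (measure_biUnion_finset₀ hAE fun c _ =>
          (measurable_colorClass m 𝔱 ω c).nullMeasurableSet).symm
      have hcover : (⋃ c ∈ (Finset.univ : Finset (ZMod p)), colorClass m 𝔱 ω c)
          = ⋃ 𝔧 : (i : Fin d) → Fin (m i + 1), elemBox m 𝔧 𝔱 := by
        ext x
        constructor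
        · intro hx
          obtain ⟨c, -, hxc⟩ := Set.mem_iUnion₂.1 hx
          obtain ⟨𝔧, -, hb⟩ := Set.mem_iUnion₂.1 hxc
          exact Set.mem_iUnion.2 ⟨𝔧, hb⟩
        · intro hx
          obtain ⟨𝔧, hb⟩ := Set.mem_iUnion.1 hx
          exact Set.mem_iUnion₂.2 ⟨ω 𝔧, Finset.mem_univ _,
            Set.mem_iUnion₂.2 ⟨𝔧, rfl, hb⟩⟩
      have hμ1 : μ j (⋃ 𝔧 : (i : Fin d) → Fin (m i + 1), elemBox m 𝔧 𝔱) = 1 := by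
        refine le_antisymm prob_le_one ?_
        calc (1:ENNReal) = μ j (Set.pi Set.univ fun _ => Set.Icc (0:ℝ) 1) := (hprob j).symm
          _ ≤ _ := measure_mono (cube_subset_union m 𝔱)
      have hsum' : ∑ c : ZMod p, (μ j (colorClass m 𝔱 ω c)).toReal = 1 := by
        rw [← ENNReal.toReal_sum fun c _ => measure_ne_top _ _, hsum, hcover, hμ1,
          ENNReal.toReal_one]
      show ∑ c : ZMod p, ((μ j (colorClass m 𝔱 ω c)).toReal - 1 / (p : ℝ)) = 0
      have hpne : (p : ℝ) ≠ 0 := Nat.cast_ne_zero.2 hp.ne_zero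
      rw [Finset.sum_sub_distrib, hsum', Finset.sum_const, Finset.card_univ, ZMod.card,
        nsmul_eq_mul, mul_one_div, div_self hpne, sub_self]
  · -- equivariance
    intro g 𝔱 ω j c
    have hiff : ∀ w : ZMod p, g + w = c ↔ w = c - g := by
      intro w
      constructor
      · intro h; rw [← h]; ring
      · intro h; rw [h]; ring
    have hset : colorClass m 𝔱 (fun 𝔧 => g + ω 𝔧) c = colorClass m 𝔱 ω (c - g) := by
      unfold colorClass
      have hs : {𝔧 : (i : Fin d) → Fin (m i + 1) | g + ω 𝔧 = c}
          = {𝔧 | ω 𝔧 = c - g} := by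
        ext 𝔧
        exact hiff (ω 𝔧)
      rw [hs]
    show (μ j (colorClass m 𝔱 (fun 𝔧 => g + ω 𝔧) c)).toReal - 1 / (p : ℝ)
        = (μ j (colorClass m 𝔱 ω (c - g))).toReal - 1 / (p : ℝ)
    rw [hset]
  · -- fair division
    intro 𝔱 ω h j c
    have h0 := congrFun (congrFun h j) c
    simp only [Pi.zero_apply] at h0
    have hh : (μ j (colorClass m 𝔱 ω c)).toReal - 1 / (p : ℝ) = 0 := h0
    linarith

end
end
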